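/- arXiv:2601.11445 — 8 statements merged into one kernel-verified Lean document; each statement's English description precedes it below -/
import Mathlib

section
/- Let H be a real Hilbert space and C : [0,T] ⇉ H a Hausdorff-continuous set-valued map with closed values such that there exists ρ > 0 for which, for every t ∈ [0,T], the set C(t) has nonempty interior and is ρ-uniformly prox-regular. Suppose that for some t̄ ∈ [0,T] there exist r > 0 and x̄ ∈ C(t̄) such that the open ball B_r(x̄) is contained in C(t̄). Then, setting δ := 𝒫_C^{-1}(min{r/2, ρ/2}), one has B_{r/2}(x̄) ⊆ C(t) for every t ∈ (t̄ − δ, t̄ + δ) ∩ [0,T]. -/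
open Set Metric Filter Topology
open scoped ENNReal

/-- The proximal normal cone of a set `S` at a point `x`. -/
def proxNormalCone {H : Type*} [NormedAddCommGroup H] [InnerProductSpace ℝ H]
    (S : Set H) (x : H) : Set H :=
  {ζ | ∃ σ : ℝ, 0 ≤ σ ∧ ∀ y ∈ S, (inner ℝ ζ (y - x) : ℝ) ≤ σ * ‖y - x‖ ^ 2}

/-- A set `S` is `ρ`-uniformly prox-regular. -/
def UniformProxRegular {H : Type*} [NormedAddCommGroup H] [InnerProductSpace ℝ H]
    (ρ : ℝ) (S : Set H) : Prop :=
  ∀ x ∈ S, ∀ ζ ∈ proxNormalCone S x, ∀ x' ∈ S,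
    (inner ℝ ζ (x' - x) : ℝ) ≤ ‖ζ‖ / (2 * ρ) * ‖x' - x‖ ^ 2

/-- A set-valued map is Hausdorff-continuous on `[0,T]`. -/
def HausdorffCts {H : Type*} [NormedAddCommGroup H] (T : ℝ) (C : ℝ → Set H) : Prop :=
  ∀ ε > 0, ∃ δ > 0, ∀ s ∈ Icc (0:ℝ) T, ∀ t ∈ Icc (0:ℝ) T, |s - t| < δ →
    EMetric.hausdorffEdist (C s) (C t) < ENNReal.ofReal ε

/-- Modulus of continuity of a set-valued map `D` on `[0,T]`. -/
noncomputable def modCont {H : Type*} [NormedAddCommGroup H]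
    (T : ℝ) (D : ℝ → Set H) (r : ℝ) : ℝ≥0∞ :=
  ⨆ (t : ℝ) (_ : t ∈ Icc 0 T) (s : ℝ) (_ : s ∈ Icc 0 T) (_ : |t - s| ≤ r),
    EMetric.hausdorffEdist (D t) (D s)

/-- Right generalized inverse of the modulus of continuity, with `inf ∅ = ∞`. -/
noncomputable def modContInv {H : Type*} [NormedAddCommGroup H]
    (T : ℝ) (D : ℝ → Set H) (x : ℝ) : ℝ≥0∞ :=
  ⨅ (r : ℝ) (_ : 0 ≤ r) (_ : ENNReal.ofReal x ≤ modCont T D r), ENNReal.ofReal r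

lemma le_of_sq_le_sq' {a b : ℝ} (h : a ^ 2 ≤ b ^ 2) (hb : 0 ≤ b) : a ≤ b := by
  nlinarith [sq_nonneg (a - b), sq_nonneg (a + b)]
open scoped ENNReal

/-- Points whose `δ`-approximate nearest points in `S` are all within `η` of each other. -/
def approxProxSet {H : Type*} [NormedAddCommGroup H] (S : Set H) (η : ℝ) : Set H :=
  {x | ∃ δ > 0, ∀ z ∈ S, ∀ z' ∈ S,
      dist x z ≤ infDist x S + δ → dist x z' ≤ infDist x S + δ → dist z z' ≤ η}

lemma approxProxSet_isOpen {H : Type*} [NormedAddCommGroup H] (S : Set H) (η : ℝ) :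
    IsOpen (approxProxSet S η) := by
  rw [Metric.isOpen_iff]
  rintro x ⟨δ, hδ0, hx⟩
  refine ⟨δ / 4, by positivity, ?_⟩
  intro x' hx'
  have hxx' : dist x' x < δ / 4 := mem_ball.mp hx'
  refine ⟨δ / 4, by positivity, ?_⟩
  intro z hz z' hz' h1 h2
  have l1 : infDist x' S ≤ infDist x S + dist x' x := infDist_le_infDist_add_dist
  apply hx z hz z' hz'
  · have l2 : dist x z ≤ dist x x' + dist x' z := dist_triangle _ _ _
    have l3 : dist x x' = dist x' x := dist_comm _ _
    linarith
  · have l2 : dist x z' ≤ dist x x' + dist x' z' := dist_triangle _ _ _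
    have l3 : dist x x' = dist x' x := dist_comm _ _
    linarith

set_option maxHeartbeats 1000000 in
private lemma key_numeric {lam δ dx m η d1 d2 dwp : ℝ}
    (hlam0 : 0 < lam) (hlam1 : lam ≤ 1 / 2) (hδ0 : 0 < δ) (hδ1 : δ ≤ dx) (hδ2 : δ ≤ 1)
    (hddx : δ * (100 * (dx + 2)) ≤ lam * η ^ 2) (hdx : 0 < dx)
    (hm0 : 0 ≤ m) (hm1 : dx ≤ m) (hm2 : m < dx + δ)
    (hxw : dx ≤ d2) (hd1 : 0 ≤ d1) (hdwp : 0 ≤ dwp)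
    (hb1 : d1 ≤ (1 - lam) * m + δ)
    (hid : lam * dwp ^ 2 = d1 ^ 2 - (1 - lam) * d2 ^ 2 + lam * (1 - lam) * m ^ 2)
    (hη : 0 < η) : dwp ≤ η / 2 := by
  have q1 : d1 ^ 2 ≤ ((1 - lam) * m + δ) ^ 2 := by nlinarith
  have q2 : (m - δ) ^ 2 ≤ d2 ^ 2 := by nlinarith
  have q3 : (1 - lam) * (m - δ) ^ 2 ≤ (1 - lam) * d2 ^ 2 :=
    mul_le_mul_of_nonneg_left q2 (by linarith)
  have q4 : ((1 - lam) * m + δ) ^ 2 - (1 - lam) * (m - δ) ^ 2 + lam * (1 - lam) * m ^ 2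
      = 4 * (1 - lam) * m * δ + lam * δ ^ 2 := by ring
  have hstep1 : lam * dwp ^ 2 ≤ 4 * m * δ + lam * δ ^ 2 := by
    nlinarith [mul_nonneg (mul_nonneg hlam0.le hm0) hδ0.le]
  have hr1 : 4 * m * δ ≤ lam * η ^ 2 / 25 := by
    nlinarith [mul_nonneg hδ0.le (show (0:ℝ) ≤ dx + 2 - m by linarith)]
  have ha1 : lam * δ ^ 2 ≤ lam * δ := by
    nlinarith [mul_nonneg (mul_nonneg hlam0.le hδ0.le) (show (0:ℝ) ≤ 1 - δ by linarith)]
  have ha2 : lam * δ ≤ δ / 2 := by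
    nlinarith [mul_nonneg hδ0.le (show (0:ℝ) ≤ 1 / 2 - lam by linarith)]
  have ha3 : δ * 200 ≤ lam * η ^ 2 := by
    nlinarith [mul_nonneg hδ0.le hdx.le]
  have hstep2 : lam * dwp ^ 2 ≤ lam * (η ^ 2 / 4) := by linarith
  have hstep3 : dwp ^ 2 ≤ η ^ 2 / 4 := le_of_mul_le_mul_left hstep2 hlam0
  exact le_of_sq_le_sq' (by nlinarith) (by positivity)

set_option maxHeartbeats 1000000 in
lemma mem_approxProxSet_near {H : Type*} [NormedAddCommGroup H] [InnerProductSpace ℝ H]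
    (S : Set H) (hSne : S.Nonempty) (η : ℝ) (hη : 0 < η) (x : H)
    (hdx : 0 < infDist x S) (ε : ℝ) (hε : 0 < ε) :
    ∃ x₁ ∈ approxProxSet S η, dist x₁ x < ε := by
  set dx := infDist x S with hdxdef
  clear_value dx
  obtain ⟨lam, hlam0, hlam1, hlamε⟩ :
      ∃ lam : ℝ, 0 < lam ∧ lam ≤ 1 / 2 ∧ lam ≤ ε / (2 * (dx + 1)) :=
    ⟨min (ε / (2 * (dx + 1))) (1 / 2),
      lt_min (div_pos hε (by linarith)) (by norm_num), min_le_right _ _, min_le_left _ _⟩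
  obtain ⟨δ, hδ0, hδ1, hδ2, hddx⟩ :
      ∃ δ : ℝ, 0 < δ ∧ δ ≤ dx ∧ δ ≤ 1 ∧ δ * (100 * (dx + 2)) ≤ lam * η ^ 2 := by
    refine ⟨min dx (min 1 (lam * η ^ 2 / (100 * (dx + 2)))), ?_, min_le_left _ _,
      (min_le_right _ _).trans (min_le_left _ _), ?_⟩
    · exact lt_min hdx (lt_min one_pos
        (div_pos (mul_pos hlam0 (pow_pos hη 2)) (by linarith)))
    · have h := (min_le_right dx _).trans
        (min_le_right 1 (lam * η ^ 2 / (100 * (dx + 2))))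
      exact (le_div_iff₀ (by linarith)).mp h
  obtain ⟨p, hpS, hp⟩ := (infDist_lt_iff hSne).mp (show infDist x S < dx + δ by
    rw [← hdxdef]; linarith)
  set m := dist x p with hmdef
  have hm0 : 0 ≤ m := hmdef ▸ dist_nonneg
  have hm1 : dx ≤ m := by rw [hmdef, hdxdef]; exact infDist_le_dist_of_mem hpS
  have hm2 : m < dx + δ := hp
  clear_value m
  set x₁ := x + lam • (p - x) with hx₁def
  have hx₁x : dist x₁ x = lam * m := by
    have h1 : x₁ - x = lam • (p - x) := by rw [hx₁def]; abel
    rw [dist_eq_norm, h1, norm_smul, Real.norm_eq_abs, abs_of_pos hlam0, ← dist_eq_norm,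
      dist_comm p x, ← hmdef]
  have hx₁p : dist x₁ p = (1 - lam) * m := by
    have h1 : x₁ - p = (1 - lam) • (x - p) := by
      rw [hx₁def, sub_smul, one_smul, smul_sub, smul_sub]; abel
    rw [dist_eq_norm, h1, norm_smul, Real.norm_eq_abs, abs_of_nonneg (by linarith),
      ← dist_eq_norm, ← hmdef]
  have hinf₁ : infDist x₁ S ≤ (1 - lam) * m := by
    rw [← hx₁p]; exact infDist_le_dist_of_mem hpS
  clear_value x₁
  have key : ∀ w ∈ S, dist x₁ w ≤ infDist x₁ S + δ → dist w p ≤ η / 2 := by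
    intro w hw hwd
    have hxw : dx ≤ dist x w := by rw [hdxdef]; exact infDist_le_dist_of_mem hw
    have hb1 : dist x₁ w ≤ (1 - lam) * m + δ := by linarith
    have e1 : dist x₁ w ^ 2 = ‖w - x‖ ^ 2 - 2 * lam * (inner ℝ (w - x) (p - x) : ℝ)
        + lam ^ 2 * ‖p - x‖ ^ 2 := by
      have h1 : x₁ - w = -((w - x) - lam • (p - x)) := by rw [hx₁def]; abel
      rw [dist_eq_norm, h1, norm_neg, norm_sub_sq_real, real_inner_smul_right, norm_smul,
        mul_pow, Real.norm_eq_abs, sq_abs]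
      ring
    have e2 : dist w p ^ 2 = ‖w - x‖ ^ 2 - 2 * (inner ℝ (w - x) (p - x) : ℝ)
        + ‖p - x‖ ^ 2 := by
      have h1 : w - p = (w - x) - (p - x) := by abel
      rw [dist_eq_norm, h1, norm_sub_sq_real]
    have e3 : dist x w = ‖w - x‖ := by rw [dist_comm, dist_eq_norm]
    have e4 : m = ‖p - x‖ := by rw [hmdef, dist_comm, dist_eq_norm]
    have hid : lam * dist w p ^ 2
        = dist x₁ w ^ 2 - (1 - lam) * dist x w ^ 2 + lam * (1 - lam) * m ^ 2 := by
      rw [e1, e2, e3, e4]; ring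
    exact key_numeric hlam0 hlam1 hδ0 hδ1 hδ2 hddx hdx hm0 hm1 hm2 hxw dist_nonneg
      dist_nonneg hb1 hid hη
  refine ⟨x₁, ⟨δ, hδ0, ?_⟩, ?_⟩
  · intro z hz z' hz' h1 h2
    have k1 := key z hz h1
    have k2 := key z' hz' h2
    calc dist z z' ≤ dist z p + dist p z' := dist_triangle _ _ _
      _ ≤ η / 2 + η / 2 := add_le_add k1 (by rw [dist_comm]; exact k2)
      _ = η := by ring
  · rw [hx₁x]
    have h5 : lam * (dx + 1) ≤ ε / (2 * (dx + 1)) * (dx + 1) :=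
      mul_le_mul_of_nonneg_right hlamε (by linarith)
    have h6 : ε / (2 * (dx + 1)) * (dx + 1) = ε / 2 := by
      field_simp
    have h7 : lam * m ≤ lam * (dx + 1) := mul_le_mul_of_nonneg_left (by linarith) hlam0.le
    linarith

set_option maxHeartbeats 1000000 in
lemma exists_nearest_near {H : Type*} [NormedAddCommGroup H] [InnerProductSpace ℝ H]
    [CompleteSpace H] (S : Set H) (hS : IsClosed S) (hSne : S.Nonempty) (y : H)
    (hy : 0 < infDist y S) (τ : ℝ) (hτ : 0 < τ) (hτd : τ ≤ infDist y S / 2) :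
    ∃ x p, dist x y < τ ∧ p ∈ S ∧ dist x p = infDist x S := by
  set W : ℕ → Set H := fun n => approxProxSet S (1 / (n + 1)) ∪ (closure (ball y τ))ᶜ with hW
  have hWopen : ∀ n, IsOpen (W n) := fun n =>
    (approxProxSet_isOpen S _).union isClosed_closure.isOpen_compl
  have hWdense : ∀ n, Dense (W n) := by
    intro n
    rw [Metric.dense_iff]
    intro x ε hε
    by_cases hcase : ∀ q ∈ ball x ε, q ∈ closure (ball y τ)
    · have hx_in : dist x y ≤ τ := by
        have h1 := hcase x (mem_ball_self hε)
        have h2 : x ∈ closedBall y τ := closure_ball_subset_closedBall h1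
        exact mem_closedBall.mp h2
      have hdx : 0 < infDist x S := by
        have h3 : infDist y S ≤ infDist x S + dist y x := infDist_le_infDist_add_dist
        rw [dist_comm] at h3
        linarith
      have hη : (0:ℝ) < 1 / (n + 1) := by positivity
      obtain ⟨x₁, hx₁U, hx₁d⟩ := mem_approxProxSet_near S hSne _ hη x hdx ε hε
      exact ⟨x₁, mem_ball.mpr hx₁d, Or.inl hx₁U⟩
    · push_neg at hcase
      obtain ⟨q, hq1, hq2⟩ := hcase
      exact ⟨q, hq1, Or.inr hq2⟩
  have hdense := dense_iInter_of_isOpen hWopen hWdense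
  obtain ⟨x, hxW, hxball⟩ := hdense.exists_mem_open isOpen_ball ⟨y, mem_ball_self hτ⟩
  have hxU : ∀ n : ℕ, x ∈ approxProxSet S (1 / (n + 1)) := by
    intro n
    have h1 := mem_iInter.mp hxW n
    rcases h1 with h1 | h1
    · exact h1
    · exact absurd (subset_closure hxball) h1
  have hex : ∀ n : ℕ, ∃ z ∈ S, dist x z < infDist x S + 1 / (n + 1) := by
    intro n
    apply (infDist_lt_iff hSne).mp
    have : (0:ℝ) < 1 / (n + 1) := by positivity
    linarith
  choose z hzS hzd using hex
  have hcauchy : CauchySeq z := by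
    rw [Metric.cauchySeq_iff]
    intro ε hε
    obtain ⟨k, hk⟩ := exists_nat_one_div_lt hε
    obtain ⟨δ, hδ0, hδ⟩ := hxU k
    obtain ⟨N, hN⟩ := exists_nat_one_div_lt hδ0
    refine ⟨N, fun m hm l hl => ?_⟩
    have hb : ∀ j : ℕ, N ≤ j → dist x (z j) ≤ infDist x S + δ := by
      intro j hj
      have h1 : (1:ℝ) / (j + 1) ≤ 1 / (N + 1) := by
        apply one_div_le_one_div_of_le (by positivity)
        exact_mod_cast Nat.succ_le_succ hj
      linarith [hzd j]
    calc dist (z m) (z l) ≤ 1 / (k + 1) := hδ (z m) (hzS m) (z l) (hzS l) (hb m hm) (hb l hl)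
      _ < ε := hk
  obtain ⟨p, hp⟩ := cauchySeq_tendsto_of_complete hcauchy
  have hpS : p ∈ S := hS.mem_of_tendsto hp (Filter.Eventually.of_forall hzS)
  refine ⟨x, p, mem_ball.mp hxball, hpS, ?_⟩
  apply le_antisymm
  · have hlim : Filter.Tendsto (fun n => dist x (z n)) Filter.atTop (𝓝 (dist x p)) :=
      Filter.Tendsto.dist tendsto_const_nhds hp
    have hlim2 : Filter.Tendsto (fun n : ℕ => infDist x S + 1 / (n + 1)) Filter.atTop
        (𝓝 (infDist x S + 0)) :=
      tendsto_const_nhds.add tendsto_one_div_add_atTop_nhds_zero_nat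
    have h := le_of_tendsto_of_tendsto' hlim hlim2 (fun n => (hzd n).le)
    simpa using h
  · exact infDist_le_dist_of_mem hpS

set_option maxHeartbeats 1000000 in
theorem stmt1 {H : Type*} [NormedAddCommGroup H] [InnerProductSpace ℝ H] [CompleteSpace H]
    (T : ℝ) (hT : 0 < T) (C : ℝ → Set H)
    (hclosed : ∀ t ∈ Icc (0:ℝ) T, IsClosed (C t))
    (hH : HausdorffCts T C)
    (ρ : ℝ) (hρ : 0 < ρ)
    (hint : ∀ t ∈ Icc (0:ℝ) T, (interior (C t)).Nonempty)
    (hpr : ∀ t ∈ Icc (0:ℝ) T, UniformProxRegular ρ (C t))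
    (tbar : ℝ) (htbar : tbar ∈ Icc (0:ℝ) T)
    (r : ℝ) (hr : 0 < r) (xbar : H) (hxbar : xbar ∈ C tbar)
    (hball : ball xbar r ⊆ C tbar) :
    ∀ t ∈ Icc (0:ℝ) T,
      ENNReal.ofReal |t - tbar| < modContInv T C (min (r / 2) (ρ / 2)) →
        ball xbar (r / 2) ⊆ C t := by
  intro t ht hlt
  have hμ0 : 0 < min (r / 2) (ρ / 2) := lt_min (by linarith) (by linarith)
  have hμr : min (r / 2) (ρ / 2) ≤ r / 2 := min_le_left _ _
  have hμρ : min (r / 2) (ρ / 2) ≤ ρ / 2 := min_le_right _ _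
  -- Step 1 : from the hypothesis on the modulus of continuity, the Hausdorff distance
  -- between `C tbar` and `C t` is `< min (r/2) (ρ/2)`.
  have hHd : EMetric.hausdorffEdist (C tbar) (C t) < ENNReal.ofReal (min (r / 2) (ρ / 2)) := by
    by_contra hcon
    push_neg at hcon
    have h1 : ENNReal.ofReal (min (r / 2) (ρ / 2)) ≤ modCont T C |t - tbar| := by
      refine le_trans hcon ?_
      simp only [modCont]
      exact le_iSup_of_le tbar (le_iSup_of_le htbar (le_iSup_of_le t (le_iSup_of_le ht
        (le_iSup_of_le (abs_sub_comm tbar t).le le_rfl))))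
    have h2 : modContInv T C (min (r / 2) (ρ / 2)) ≤ ENNReal.ofReal |t - tbar| := by
      simp only [modContInv]
      exact iInf_le_of_le |t - tbar| (iInf_le_of_le (abs_nonneg _) (iInf_le_of_le h1 le_rfl))
    exact absurd hlt (not_lt.mpr h2)
  have hne_top : EMetric.hausdorffEdist (C tbar) (C t) ≠ ⊤ := ne_top_of_lt hHd
  have h_etoReal : (EMetric.hausdorffEdist (C tbar) (C t)).toReal < min (r / 2) (ρ / 2) :=
    (ENNReal.lt_ofReal_iff_toReal_lt hne_top).mp hHd
  set ε' : ℝ := ((EMetric.hausdorffEdist (C tbar) (C t)).toReal + min (r / 2) (ρ / 2)) / 2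
    with hε'def
  have het0 : 0 ≤ (EMetric.hausdorffEdist (C tbar) (C t)).toReal := ENNReal.toReal_nonneg
  have hε'1 : (EMetric.hausdorffEdist (C tbar) (C t)).toReal < ε' := by
    rw [hε'def]; linarith
  have hε'2 : ε' < min (r / 2) (ρ / 2) := by rw [hε'def]; linarith
  have hε'0 : 0 < ε' := by rw [hε'def]; linarith
  clear_value ε'
  have hε'r : ε' < r / 2 := lt_of_lt_of_le hε'2 hμr
  have hε'ρ : ε' < ρ / 2 := lt_of_lt_of_le hε'2 hμρ
  have hEbound : EMetric.hausdorffEdist (C tbar) (C t) < ENNReal.ofReal ε' := by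
    rw [← ENNReal.ofReal_toReal hne_top]
    exact (ENNReal.ofReal_lt_ofReal_iff hε'0).mpr hε'1
  -- every point of `C tbar` is within `ε'` of `C t`
  have hnear : ∀ w ∈ C tbar, ∃ z ∈ C t, dist w z < ε' := by
    intro w hw
    have h1 : EMetric.infEdist w (C t) < ENNReal.ofReal ε' :=
      lt_of_le_of_lt (EMetric.infEdist_le_hausdorffEdist_of_mem hw) hEbound
    obtain ⟨z, hzS, hz⟩ := EMetric.infEdist_lt_iff.mp h1
    exact ⟨z, hzS, edist_lt_ofReal.mp hz⟩
  intro y hy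
  by_contra hyS
  have hSclosed : IsClosed (C t) := hclosed t ht
  have hyxbar : dist y xbar < r / 2 := mem_ball.mp hy
  have hyCtbar : y ∈ C tbar := hball (mem_ball.mpr (by linarith))
  have hSne : (C t).Nonempty := by
    obtain ⟨z, hz, -⟩ := hnear y hyCtbar
    exact ⟨z, hz⟩
  have hd0 : 0 < infDist y (C t) := (hSclosed.notMem_iff_infDist_pos hSne).mp hyS
  set d : ℝ := infDist y (C t) with hddef
  have hdε' : d < ε' := by
    obtain ⟨z, hz, hzd⟩ := hnear y hyCtbar
    exact lt_of_le_of_lt (by rw [hddef]; exact infDist_le_dist_of_mem hz) hzd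
  clear_value d
  -- Step 2 : find a point `x` near `y` having a nearest point `p` in `C t`
  set τ : ℝ := min (d / 2) ((r / 2 - ε') / 2) with hτdef
  have hτ0 : 0 < τ := lt_min (by linarith) (by linarith)
  have hτd : τ ≤ d / 2 := min_le_left _ _
  have hτr : τ ≤ (r / 2 - ε') / 2 := min_le_right _ _
  clear_value τ
  obtain ⟨x, p, hxy, hpS, hxp⟩ := exists_nearest_near (C t) hSclosed hSne y
    (by rw [← hddef]; exact hd0) τ hτ0 (by rw [← hddef]; exact hτd)
  set D : ℝ := dist x p with hDdef
  -- bounds on D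
  have hDlow : d - τ ≤ D := by
    have h1 : infDist y (C t) ≤ infDist x (C t) + dist y x := infDist_le_infDist_add_dist
    have h2 : dist y x < τ := by rw [dist_comm]; exact hxy
    rw [← hddef, ← hxp] at h1
    linarith
  have hDhigh : D ≤ d + τ := by
    have h1 : infDist x (C t) ≤ infDist y (C t) + dist x y := infDist_le_infDist_add_dist
    rw [← hddef, ← hxp] at h1
    linarith
  have hD0 : 0 < D := by linarith
  -- Step 3 : ζ = x - p is a proximal normal at p
  have hζnorm : ‖x - p‖ = D := by rw [hDdef, dist_eq_norm]
  have hζNP : x - p ∈ proxNormalCone (C t) p := by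
    refine ⟨1 / 2, by norm_num, ?_⟩
    intro z hz
    have h1 : D ≤ dist x z := by
      rw [hxp]; exact infDist_le_dist_of_mem hz
    have e1 : dist x z ^ 2 = ‖x - p‖ ^ 2 - 2 * (inner ℝ (x - p) (z - p) : ℝ) + ‖z - p‖ ^ 2 := by
      have h2 : x - z = (x - p) - (z - p) := by abel
      rw [dist_eq_norm, h2, norm_sub_sq_real]
    have h3 : D ^ 2 ≤ dist x z ^ 2 := by nlinarith [hD0.le, dist_nonneg (x := x) (y := z)]
    have h4 : ‖x - p‖ ^ 2 = D ^ 2 := by rw [hζnorm]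
    linarith
  have hprox := hpr t ht p hpS (x - p) hζNP
  -- Step 4 : choice of the step length s
  have hB0 : 0 < min (ρ - D) (r / 2 - τ) :=
    lt_min (by linarith) (by linarith)
  have hAB : max (ε' - D) 0 < min (ρ - D) (r / 2 - τ) :=
    max_lt (lt_min (by linarith) (by linarith)) hB0
  set s : ℝ := (max (ε' - D) 0 + min (ρ - D) (r / 2 - τ)) / 2 with hsdef
  have hs0 : 0 < s := by
    have := le_max_right (ε' - D) 0
    rw [hsdef]; linarith
  have hsB : s < min (ρ - D) (r / 2 - τ) := by rw [hsdef]; linarith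
  have hsA : ε' - D < s := by
    have := le_max_left (ε' - D) 0
    rw [hsdef]; linarith
  clear_value s
  have hsρ : D + s ≤ ρ := by
    have := lt_of_lt_of_le hsB (min_le_left _ _); linarith
  have hsr : s < r / 2 - τ := lt_of_lt_of_le hsB (min_le_right _ _)
  -- Step 5 : the point w := x + (s/D) • (x - p) is far from C t
  set w : H := x + (s * D⁻¹) • (x - p) with hwdef
  have hwx : dist w x = s := by
    have h1 : w - x = (s * D⁻¹) • (x - p) := by rw [hwdef]; abel
    rw [dist_eq_norm, h1, norm_smul, Real.norm_eq_abs, abs_of_pos (by positivity), hζnorm]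
    field_simp
  have hfar : ∀ z ∈ C t, D + s ≤ dist w z := by
    intro z hz
    have hIa := hprox z hz
    rw [hζnorm] at hIa
    have hc : (D + s) / D = 1 + s * D⁻¹ := by field_simp
    have hwz : z - w = (z - p) - ((D + s) / D) • (x - p) := by
      rw [hc, add_smul, one_smul, hwdef]; abel
    have e1 : dist w z ^ 2 = ‖z - p‖ ^ 2 - 2 * ((D + s) / D) * (inner ℝ (x - p) (z - p) : ℝ)
        + ((D + s) / D) ^ 2 * D ^ 2 := by
      rw [dist_comm, dist_eq_norm, hwz, norm_sub_sq_real, real_inner_smul_right, norm_smul,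
        mul_pow, Real.norm_eq_abs, sq_abs, hζnorm, real_inner_comm (z - p) (x - p)]
      ring
    have hcpos : (0:ℝ) ≤ 2 * ((D + s) / D) := by positivity
    have h3 := mul_le_mul_of_nonneg_left hIa hcpos
    have h4 : 2 * ((D + s) / D) * (D / (2 * ρ) * ‖z - p‖ ^ 2) = (D + s) / ρ * ‖z - p‖ ^ 2 := by
      field_simp
    have h2 : 2 * ((D + s) / D) * (inner ℝ (x - p) (z - p) : ℝ) ≤ (D + s) / ρ * ‖z - p‖ ^ 2 := by
      rw [← h4]; exact h3
    have h6 : (D + s) / ρ ≤ 1 := (div_le_one hρ).mpr hsρ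
    have h5 : (D + s) / ρ * ‖z - p‖ ^ 2 ≤ ‖z - p‖ ^ 2 := by
      nlinarith [sq_nonneg ‖z - p‖]
    have h7 : ((D + s) / D) ^ 2 * D ^ 2 = (D + s) ^ 2 := by field_simp
    have hsq : (D + s) ^ 2 ≤ dist w z ^ 2 := by linarith [e1, h2, h5, h7]
    exact le_of_sq_le_sq' hsq dist_nonneg
  -- Step 6 : contradiction
  have hwball : dist w xbar < r := by
    have h1 : dist w xbar ≤ dist w x + dist x y + dist y xbar := dist_triangle4 w x y xbar
    rw [hwx] at h1
    linarith
  obtain ⟨z, hz, hzd⟩ := hnear w (hball (mem_ball.mpr hwball))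
  have hfz := hfar z hz
  linarith
end

section
/- Let H be a real Hilbert space and C : [0,T] ⇉ H a Hausdorff-continuous set-valued map with closed values such that there exists ρ > 0 for which, for every t ∈ [0,T], the set C(t) is ρ-uniformly prox-regular. If C(t₀) = H for some t₀ ∈ [0,T], then C(t) = H for all t ∈ [0,T]. -/
open Set Metric
open scoped ENNReal

noncomputable def pickNearMin {H : Type*} [Nonempty H] (S : Set H) (F : H → ℝ) (δ : ℝ) : H :=
  Classical.epsilon (fun z => z ∈ S ∧ ∀ w ∈ S, F z ≤ F w + δ)

lemma pickNearMin_spec {H : Type*} [Nonempty H] {S : Set H} {F : H → ℝ} {δ : ℝ}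
    (hS : S.Nonempty) (hF : ∀ z ∈ S, 0 ≤ F z) (hδ : 0 < δ) :
    pickNearMin S F δ ∈ S ∧ ∀ w ∈ S, F (pickNearMin S F δ) ≤ F w + δ := by
  have : ∃ z, z ∈ S ∧ ∀ w ∈ S, F z ≤ F w + δ := by
    have hne : (F '' S).Nonempty := hS.image F
    have hbdd : BddBelow (F '' S) := ⟨0, by rintro _ ⟨z, hz, rfl⟩; exact hF z hz⟩
    obtain ⟨a, ⟨z, hz, rfl⟩, ha⟩ := exists_lt_of_csInf_lt hne (lt_add_of_pos_right (sInf (F '' S)) hδ)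
    exact ⟨z, hz, fun w hw => le_trans ha.le (by
      have := csInf_le hbdd (Set.mem_image_of_mem F hw); linarith)⟩
  exact Classical.epsilon_spec this

noncomputable def bpState {H : Type*} [NormedAddCommGroup H]
    (S : Set H) (y : H) (μ δ : ℕ → ℝ) : ℕ → (H → ℝ) × H
  | 0 => ((fun z => ‖y - z‖ ^ 2), pickNearMin S (fun z => ‖y - z‖ ^ 2) (δ 0))
  | (n+1) =>
      let F := (bpState S y μ δ n).1
      let x := (bpState S y μ δ n).2
      ((fun z => F z + μ n * ‖z - x‖ ^ 2),
        pickNearMin S (fun z => F z + μ n * ‖z - x‖ ^ 2) (δ (n+1)))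

section BP
variable {H : Type*} [NormedAddCommGroup H] (S : Set H) (y : H) (μ δ : ℕ → ℝ)

noncomputable def bpF (n : ℕ) : H → ℝ := (bpState S y μ δ n).1
noncomputable def bpX (n : ℕ) : H := (bpState S y μ δ n).2

lemma bpF_zero (z : H) : bpF S y μ δ 0 z = ‖y - z‖ ^ 2 := rfl

lemma bpF_succ (n : ℕ) (z : H) :
    bpF S y μ δ (n+1) z = bpF S y μ δ n z + μ n * ‖z - bpX S y μ δ n‖ ^ 2 := rfl

lemma bpX_zero : bpX S y μ δ 0 = pickNearMin S (fun z => ‖y - z‖ ^ 2) (δ 0) := rfl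

lemma bpX_succ (n : ℕ) :
    bpX S y μ δ (n+1) = pickNearMin S (bpF S y μ δ (n+1)) (δ (n+1)) := rfl

lemma bpF_formula (n : ℕ) (z : H) :
    bpF S y μ δ n z = ‖y - z‖ ^ 2 + ∑ i ∈ Finset.range n, μ i * ‖z - bpX S y μ δ i‖ ^ 2 := by
  induction n with
  | zero => simp [bpF_zero]
  | succ n ih => rw [bpF_succ, ih, Finset.sum_range_succ]; ring

lemma bpF_nonneg (hμ : ∀ n, 0 ≤ μ n) (n : ℕ) (z : H) : 0 ≤ bpF S y μ δ n z := by
  rw [bpF_formula]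
  have : 0 ≤ ∑ i ∈ Finset.range n, μ i * ‖z - bpX S y μ δ i‖ ^ 2 :=
    Finset.sum_nonneg fun i _ => mul_nonneg (hμ i) (by positivity)
  positivity

lemma bpX_spec (hS : S.Nonempty) (hμ : ∀ n, 0 ≤ μ n) (hδ : ∀ n, 0 < δ n) (n : ℕ) :
    bpX S y μ δ n ∈ S ∧
      ∀ w ∈ S, bpF S y μ δ n (bpX S y μ δ n) ≤ bpF S y μ δ n w + δ n := by
  cases n with
  | zero =>
      exact pickNearMin_spec hS (fun z _ => bpF_nonneg S y μ δ hμ 0 z) (hδ 0)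
  | succ n =>
      exact pickNearMin_spec hS (fun z _ => bpF_nonneg S y μ δ hμ (n+1) z) (hδ (n+1))

end BP

/-- In a complete real inner ℝ product space, every nonempty closed proper subset admits a
nonzero proximal normal at some point. -/
lemma exists_nonzero_proxNormal {H : Type*} [NormedAddCommGroup H] [InnerProductSpace ℝ H]
    [CompleteSpace H] {S : Set H} (hSc : IsClosed S) (hS : S.Nonempty) {y : H} (hy : y ∉ S) :
    ∃ x ∈ S, ∃ ζ : H, ζ ≠ 0 ∧ ζ ∈ proxNormalCone S x := by
  classical
  set d := infDist y S with hd_def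
  have hd : 0 < d := by
    rcases lt_or_eq_of_le (infDist_nonneg : 0 ≤ d) with h | h
    · exact h
    · exfalso
      exact hy (hSc.closure_eq ▸ (mem_closure_iff_infDist_zero hS).2 h.symm)
  set ε : ℝ := d / 12 with hε_def
  have hε : 0 < ε := by positivity
  set μ : ℕ → ℝ := fun n => ε * (1/2)^n with hμ_def
  set δ : ℕ → ℝ := fun n => ε * (1/8)^n with hδ_def
  have hμpos : ∀ n, 0 < μ n := fun n => by simp only [hμ_def]; positivity
  have hδpos : ∀ n, 0 < δ n := fun n => by simp only [hδ_def]; positivity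
  set x : ℕ → H := bpX S y μ δ with hx_def
  set F : ℕ → H → ℝ := bpF S y μ δ with hF_def
  have spec : ∀ n, x n ∈ S ∧ ∀ w ∈ S, F n (x n) ≤ F n w + δ n :=
    fun n => bpX_spec S y μ δ hS (fun n => (hμpos n).le) hδpos n
  have hFform : ∀ n z, F n z = ‖y - z‖ ^ 2 + ∑ i ∈ Finset.range n, μ i * ‖z - x i‖ ^ 2 :=
    fun n z => bpF_formula S y μ δ n z
  -- (a) successive penalization estimate
  have hstep : ∀ n, μ n * ‖x (n+1) - x n‖^2 ≤ δ n + δ (n+1) := by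
    intro n
    have h1 : F (n+1) (x (n+1)) ≤ F (n+1) (x n) + δ (n+1) := (spec (n+1)).2 _ (spec n).1
    have h2 : F (n+1) (x n) = F n (x n) := by
      rw [hF_def, hx_def, bpF_succ]; simp
    have h3 : F n (x n) ≤ F n (x (n+1)) + δ n := (spec n).2 _ (spec (n+1)).1
    have h4 : F (n+1) (x (n+1)) = F n (x (n+1)) + μ n * ‖x (n+1) - x n‖^2 := by
      rw [hF_def, hx_def, bpF_succ]
    linarith
  -- (b) geometric bound on increments
  have hdiff : ∀ n, ‖x (n+1) - x n‖ ≤ 2 * (1/2)^n := by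
    intro n
    have h := hstep n
    have hq : ((1:ℝ)/2)^n * (1/4)^n = (1/8)^n := by
      rw [← mul_pow]; norm_num
    have hsq : ((2:ℝ) * (1/2)^n)^2 = 4 * (1/4)^n := by
      rw [mul_pow, ← pow_mul, mul_comm n 2, pow_mul]
      norm_num
    have key : μ n * ‖x (n+1) - x n‖^2 ≤ μ n * (2*(1/2)^n)^2 := by
      have hbound : δ n + δ (n+1) ≤ μ n * (2*(1/2)^n)^2 := by
        simp only [hμ_def, hδ_def]
        have h8pos : (0:ℝ) < (1/8:ℝ)^n := by positivity
        calc ε * (1/8:ℝ)^n + ε * (1/8)^(n+1) = ε * (9/8) * (1/8)^n := by rw [pow_succ]; ring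
          _ ≤ 4 * ε * (1/8)^n := by nlinarith
          _ = ε * (1/2)^n * (4 * (1/4)^n) := by rw [← hq]; ring
          _ = ε * (1/2)^n * (2*(1/2)^n)^2 := by rw [hsq]
      linarith
    have h2 := le_of_mul_le_mul_left key (hμpos n)
    exact (pow_le_pow_iff_left₀ (norm_nonneg _) (by positivity) two_ne_zero).1 h2
  -- (c) convergence
  have hdist : ∀ n, dist (x n) (x (n+1)) ≤ 2 * (1/2)^n := by
    intro n; rw [dist_eq_norm, norm_sub_rev]; exact hdiff n
  have hcauchy : CauchySeq x := cauchySeq_of_le_geometric (1/2) 2 (by norm_num) hdist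
  obtain ⟨xb, hxb⟩ := cauchySeq_tendsto_of_complete hcauchy
  have hxbS : xb ∈ S := hSc.mem_of_tendsto hxb (Filter.Eventually.of_forall fun n => (spec n).1)
  have hdistxb : ∀ n, dist (x n) xb ≤ 4 * (1/2)^n := by
    intro n
    have h := dist_le_of_le_geometric_of_tendsto (1/2) 2 (by norm_num) hdist hxb n
    calc dist (x n) xb ≤ 2 * (1/2)^n / (1 - 1/2) := h
      _ = 4 * (1/2)^n := by ring
  have hxbound : ∀ n, ‖xb - x n‖ ≤ 4 * (1/2)^n := by
    intro n; rw [← dist_eq_norm, dist_comm]; exact hdistxb n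
  -- summability
  have hgeo2 : Summable (fun n : ℕ => ((1:ℝ)/2)^n) :=
    summable_geometric_of_lt_one (by norm_num) (by norm_num)
  have hgeo4 : Summable (fun n : ℕ => ((1:ℝ)/4)^n) :=
    summable_geometric_of_lt_one (by norm_num) (by norm_num)
  have hμsum : Summable μ := by
    simpa only [hμ_def] using hgeo2.mul_left ε
  set M : ℝ := ∑' n, μ n with hM_def
  have hMnn : 0 ≤ M := tsum_nonneg fun n => (hμpos n).le
  have hTsum : ∀ z : H, Summable (fun i => μ i * ‖z - x i‖^2) := by
    intro z
    refine Summable.of_nonneg_of_le (fun i => by positivity) (fun i => ?_)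
      (hμsum.mul_right ((‖z - xb‖ + 4)^2))
    have h1 : ‖z - x i‖ ≤ ‖z - xb‖ + 4 := by
      have h2 : ‖z - x i‖ ≤ ‖z - xb‖ + ‖xb - x i‖ := by
        calc ‖z - x i‖ = ‖(z - xb) + (xb - x i)‖ := by rw [sub_add_sub_cancel]
          _ ≤ ‖z - xb‖ + ‖xb - x i‖ := norm_add_le _ _
      have h3 : ‖xb - x i‖ ≤ 4 := by
        have := hxbound i
        have hle1 : ((1:ℝ)/2)^i ≤ 1 := pow_le_one₀ (by norm_num) (by norm_num)
        nlinarith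
      linarith
    exact mul_le_mul_of_nonneg_left (pow_le_pow_left₀ (norm_nonneg _) h1 2) (hμpos i).le
  set T : H → ℝ := fun z => ∑' i, μ i * ‖z - x i‖^2 with hT_def
  set Finf : H → ℝ := fun z => ‖y - z‖^2 + T z with hFinf_def
  have hFleFinf : ∀ n z, F n z ≤ Finf z := by
    intro n z
    rw [hFform n z]
    have := Summable.sum_le_tsum (Finset.range n) (fun i _ => by positivity) (hTsum z)
    simp only [hFinf_def, hT_def]
    linarith
  have hmono : ∀ {n m : ℕ}, n ≤ m → ∀ z, F n z ≤ F m z := by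
    intro n m h z
    rw [hFform n z, hFform m z]
    have : ∑ i ∈ Finset.range n, μ i * ‖z - x i‖^2
        ≤ ∑ i ∈ Finset.range m, μ i * ‖z - x i‖^2 :=
      Finset.sum_le_sum_of_subset_of_nonneg (Finset.range_subset_range.2 h)
        (fun i _ _ => by positivity)
    linarith
  have hFcont : ∀ n, Continuous (F n) := by
    intro n
    have heq : F n = fun z => ‖y - z‖^2 + ∑ i ∈ Finset.range n, μ i * ‖z - x i‖^2 :=
      funext (hFform n)
    rw [heq]
    exact ((continuous_const.sub continuous_id).norm.pow 2).add
      (continuous_finset_sum _ fun i _ =>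
        continuous_const.mul (((continuous_id.sub continuous_const).norm.pow 2)))
  have hδlim : Filter.Tendsto δ Filter.atTop (nhds 0) := by
    have := (tendsto_pow_atTop_nhds_zero_of_lt_one (by norm_num : (0:ℝ) ≤ 1/8)
      (by norm_num)).const_mul ε
    simpa only [hδ_def, mul_zero] using this
  have hC : ∀ n, ∀ z ∈ S, F n xb ≤ Finf z := by
    intro n z hz
    have hle : ∀ᶠ m in Filter.atTop, F n (x m) ≤ Finf z + δ m := by
      filter_upwards [Filter.eventually_ge_atTop n] with m hm
      calc F n (x m) ≤ F m (x m) := hmono hm _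
        _ ≤ F m z + δ m := (spec m).2 z hz
        _ ≤ Finf z + δ m := by linarith [hFleFinf m z]
    have h1 : Filter.Tendsto (fun m => F n (x m)) Filter.atTop (nhds (F n xb)) :=
      ((hFcont n).tendsto xb).comp hxb
    have h2 : Filter.Tendsto (fun m => Finf z + δ m) Filter.atTop (nhds (Finf z + 0)) :=
      tendsto_const_nhds.add hδlim
    have := le_of_tendsto_of_tendsto h1 h2 hle
    simpa using this
  have hD : Filter.Tendsto (fun n => F n xb) Filter.atTop (nhds (Finf xb)) := by
    have h1 : Filter.Tendsto (fun n => ∑ i ∈ Finset.range n, μ i * ‖xb - x i‖^2)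
        Filter.atTop (nhds (T xb)) := (hTsum xb).hasSum.tendsto_sum_nat
    have heq : (fun n => F n xb)
        = fun n => ‖y - xb‖^2 + ∑ i ∈ Finset.range n, μ i * ‖xb - x i‖^2 :=
      funext fun n => hFform n xb
    rw [heq, hFinf_def]
    exact tendsto_const_nhds.add h1
  have hE : ∀ z ∈ S, Finf xb ≤ Finf z := fun z hz =>
    le_of_tendsto hD (Filter.Eventually.of_forall fun n => hC n z hz)
  -- the correction vector
  have hvnorm : ∀ i, ‖μ i • (xb - x i)‖ ≤ (4*ε) * (1/4)^i := by
    intro i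
    rw [norm_smul, Real.norm_eq_abs, abs_of_pos (hμpos i)]
    have h1 : ‖xb - x i‖ ≤ 4 * (1/2)^i := hxbound i
    have h2 : μ i = ε * (1/2)^i := rfl
    calc μ i * ‖xb - x i‖ ≤ (ε * (1/2)^i) * (4 * (1/2)^i) := by
          rw [← h2]
          exact mul_le_mul_of_nonneg_left h1 (hμpos i).le
      _ = (4*ε) * ((1/2)^i * (1/2)^i) := by ring
      _ = (4*ε) * (1/4)^i := by rw [← mul_pow]; norm_num
  have hnsum : Summable (fun i => ‖μ i • (xb - x i)‖) :=
    Summable.of_nonneg_of_le (fun i => norm_nonneg _) hvnorm (hgeo4.mul_left (4*ε))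
  have hvsum : Summable (fun i => μ i • (xb - x i)) := Summable.of_norm hnsum
  set v : H := ∑' i, μ i • (xb - x i) with hv_def
  have hvle : ‖v‖ ≤ (16/3) * ε := by
    calc ‖v‖ ≤ ∑' i, ‖μ i • (xb - x i)‖ := norm_tsum_le_tsum_norm hnsum
      _ ≤ ∑' i, (4*ε) * (1/4)^i := Summable.tsum_le_tsum hvnorm hnsum (hgeo4.mul_left (4*ε))
      _ = (4*ε) * ∑' i, ((1:ℝ)/4)^i := tsum_mul_left
      _ = (16/3) * ε := by
          rw [tsum_geometric_of_lt_one (by norm_num) (by norm_num)]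
          norm_num
          ring
  set ζ : H := (y - xb) - v with hζ_def
  have hζineq : ∀ z ∈ S, (inner ℝ ζ (z - xb) : ℝ) ≤ (1 + M)/2 * ‖z - xb‖^2 := by
    intro z hz
    have h0 : 0 ≤ Finf z - Finf xb := sub_nonneg.2 (hE z hz)
    set w : H := z - xb with hw_def
    have hterm : ∀ i, μ i * ‖z - x i‖^2 - μ i * ‖xb - x i‖^2
        = 2 * (inner ℝ w (μ i • (xb - x i)) : ℝ) + μ i * ‖w‖^2 := by
      intro i
      have he : ‖z - x i‖^2 = ‖w + (xb - x i)‖^2 := by rw [hw_def, sub_add_sub_cancel]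
      rw [he, norm_add_sq_real, real_inner_smul_right]
      ring
    have hsum1 : Summable (fun i => (inner ℝ w (μ i • (xb - x i)) : ℝ)) := by
      have h := (innerSL ℝ w).summable hvsum
      simpa only [innerSL_apply_apply] using h
    have hsum2 : Summable (fun i => μ i * ‖w‖^2) := hμsum.mul_right _
    have hTzw : T z - T xb = 2 * (inner ℝ w v : ℝ) + M * ‖w‖^2 := by
      have h1 : T z - T xb = ∑' i, (μ i * ‖z - x i‖^2 - μ i * ‖xb - x i‖^2) :=
        (Summable.tsum_sub (hTsum z) (hTsum xb)).symm
      rw [h1]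
      have h2 : ∀ i, μ i * ‖z - x i‖^2 - μ i * ‖xb - x i‖^2
          = 2 * (inner ℝ w (μ i • (xb - x i)) : ℝ) + μ i * ‖w‖^2 := hterm
      rw [tsum_congr h2, Summable.tsum_add (hsum1.mul_left 2) hsum2]
      have h3 : ∑' i, 2 * (inner ℝ w (μ i • (xb - x i)) : ℝ)
          = 2 * (inner ℝ w v : ℝ) := by
        rw [tsum_mul_left]
        congr 1
        have h := (innerSL ℝ w).map_tsum hvsum
        simp only [innerSL_apply_apply] at h
        rw [hv_def]
        exact h.symm
      have h4 : ∑' i, μ i * ‖w‖^2 = M * ‖w‖^2 := tsum_mul_right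
      rw [h3, h4]
    have hyz : ‖y - z‖^2 = ‖y - xb‖^2 - 2 * (inner ℝ (y - xb) w : ℝ) + ‖w‖^2 := by
      have he : y - z = (y - xb) - w := by rw [hw_def]; abel
      rw [he, norm_sub_sq_real]
    have hFdiff : Finf z - Finf xb
        = ‖y - z‖^2 - ‖y - xb‖^2 + (T z - T xb) := by
      simp only [hFinf_def]; ring
    rw [hFdiff, hyz, hTzw] at h0
    have hinner : (inner ℝ ζ w : ℝ) = (inner ℝ (y - xb) w : ℝ) - (inner ℝ v w : ℝ) := by
      rw [hζ_def, inner_sub_left]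
    have hcomm : (inner ℝ v w : ℝ) = (inner ℝ w v : ℝ) := real_inner_comm w v
    rw [hw_def] at hinner hcomm ⊢
    rw [hinner, hcomm]
    nlinarith [h0]
  -- ζ is nonzero
  have hyxb : d ≤ ‖y - xb‖ := by
    rw [← dist_eq_norm]; exact infDist_le_dist_of_mem hxbS
  have hζpos : ζ ≠ 0 := by
    have h1 : ‖y - xb‖ - ‖v‖ ≤ ‖ζ‖ := by
      rw [hζ_def]; exact norm_sub_norm_le _ _ |>.trans_eq rfl |> fun h => h
    intro h0
    rw [h0, norm_zero] at h1
    have : ‖v‖ ≤ (16/3) * (d/12) := hvle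
    linarith
  exact ⟨xb, hxbS, ζ, hζpos, ⟨(1 + M)/2, by linarith, hζineq⟩⟩

/-- A uniformly prox-regular closed set that is ρ-dense equals the whole space. -/
lemma prox_dense_eq_univ {H : Type*} [NormedAddCommGroup H] [InnerProductSpace ℝ H]
    [CompleteSpace H] {S : Set H} (hSc : IsClosed S) {ρ : ℝ} (hρ : 0 < ρ)
    (hpr : UniformProxRegular ρ S) (hdense : ∀ p : H, ∃ z ∈ S, dist p z < ρ) :
    S = univ := by
  by_contra hne
  obtain ⟨y, hy⟩ : ∃ y, y ∉ S := by
    by_contra h; push_neg at h; exact hne (eq_univ_of_forall h)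
  obtain ⟨z₀, hz₀, _⟩ := hdense y
  obtain ⟨xb, hxbS, ζ, hζ0, hζcone⟩ := exists_nonzero_proxNormal hSc ⟨z₀, hz₀⟩ hy
  have hζn : 0 < ‖ζ‖ := norm_pos_iff.2 hζ0
  set p : H := xb + (ρ/‖ζ‖) • ζ with hp_def
  obtain ⟨z, hz, hzd⟩ := hdense p
  have hkey : (inner ℝ ζ (z - xb) : ℝ) ≤ ‖ζ‖ / (2 * ρ) * ‖z - xb‖^2 :=
    hpr xb hxbS ζ hζcone z hz
  have hdge : ρ ≤ dist p z := by
    have hpz : p - z = (xb - z) + (ρ/‖ζ‖) • ζ := by rw [hp_def]; abel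
    have hsq : ‖p - z‖^2 = ‖xb - z‖^2 + 2 * ((ρ/‖ζ‖) * (inner ℝ (xb - z) ζ : ℝ))
        + (ρ/‖ζ‖)^2 * ‖ζ‖^2 := by
      rw [hpz, norm_add_sq_real, real_inner_smul_right, norm_smul, Real.norm_eq_abs,
        abs_of_pos (by positivity : (0:ℝ) < ρ/‖ζ‖), mul_pow]
    have h1 : (inner ℝ (xb - z) ζ : ℝ) = -(inner ℝ ζ (z - xb) : ℝ) := by
      rw [real_inner_comm, ← inner_neg_right]
      congr 1
      abel
    have h2 : (ρ/‖ζ‖)^2 * ‖ζ‖^2 = ρ^2 := by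
      field_simp
    have h3 : ‖xb - z‖ = ‖z - xb‖ := norm_sub_rev _ _
    have h4 : (ρ/‖ζ‖) * (‖ζ‖ / (2*ρ)) = 1/2 := by
      field_simp
    have h5 : ρ^2 ≤ ‖p - z‖^2 := by
      rw [hsq, h1, h2, h3]
      have h6 : (ρ/‖ζ‖) * (inner ℝ ζ (z - xb) : ℝ) ≤ (1/2) * ‖z - xb‖^2 := by
        calc (ρ/‖ζ‖) * (inner ℝ ζ (z - xb) : ℝ)
            ≤ (ρ/‖ζ‖) * (‖ζ‖ / (2*ρ) * ‖z - xb‖^2) :=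
              mul_le_mul_of_nonneg_left hkey (by positivity)
          _ = ((ρ/‖ζ‖) * (‖ζ‖ / (2*ρ))) * ‖z - xb‖^2 := by ring
          _ = (1/2) * ‖z - xb‖^2 := by rw [h4]
      nlinarith
    rw [dist_eq_norm]
    exact (pow_le_pow_iff_left₀ hρ.le (norm_nonneg _) two_ne_zero).1 h5
  linarith [hzd]

theorem stmt2 {H : Type*} [NormedAddCommGroup H] [InnerProductSpace ℝ H] [CompleteSpace H]
    (T : ℝ) (hT : 0 < T) (C : ℝ → Set H)
    (hclosed : ∀ t ∈ Icc (0:ℝ) T, IsClosed (C t))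
    (hH : HausdorffCts T C)
    (ρ : ℝ) (hρ : 0 < ρ)
    (hpr : ∀ t ∈ Icc (0:ℝ) T, UniformProxRegular ρ (C t))
    (t₀ : ℝ) (ht₀ : t₀ ∈ Icc (0:ℝ) T) (hall : C t₀ = univ) :
    ∀ t ∈ Icc (0:ℝ) T, C t = univ := by
  set A : Set ℝ := {t | t ∈ Icc (0:ℝ) T ∧ C t = univ} with hA_def
  have ht₀A : t₀ ∈ A := ⟨ht₀, hall⟩
  have hmain : ∀ s ∈ Icc (0:ℝ) T,
      EMetric.hausdorffEdist (C s) univ < ENNReal.ofReal (ρ/2) → C s = univ := by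
    intro s hs hsd
    apply prox_dense_eq_univ (hclosed s hs) hρ (hpr s hs)
    intro p
    have h1 : EMetric.infEdist p (C s) ≤ EMetric.hausdorffEdist (univ : Set H) (C s) :=
      EMetric.infEdist_le_hausdorffEdist_of_mem (mem_univ p)
    rw [EMetric.hausdorffEdist, EMetric.hausdorffEdist_comm] at h1
    have h2 : EMetric.infEdist p (C s) < ENNReal.ofReal ρ :=
      lt_of_le_of_lt h1 (lt_of_lt_of_le hsd (ENNReal.ofReal_le_ofReal (by linarith)))
    obtain ⟨z, hz, hze⟩ := EMetric.infEdist_lt_iff.1 h2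
    exact ⟨z, hz, edist_lt_ofReal.1 hze⟩
  have hAclosed : IsClosed A := by
    apply isClosed_of_closure_subset
    intro t ht
    have htI : t ∈ Icc (0:ℝ) T := by
      have hsub : closure A ⊆ closure (Icc (0:ℝ) T) := closure_mono (fun u hu => hu.1)
      have := hsub ht
      rwa [isClosed_Icc.closure_eq] at this
    refine ⟨htI, ?_⟩
    apply eq_univ_of_forall
    intro yy
    have hmem : yy ∈ closure (C t) := by
      rw [Metric.mem_closure_iff]
      intro ε' hε'
      obtain ⟨δ, hδ, hδ'⟩ := hH ε' hε'
      obtain ⟨s, hsA, hst⟩ := Metric.mem_closure_iff.1 ht δ hδ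
      have habs : |s - t| < δ := by
        rw [abs_sub_comm, ← Real.dist_eq]; exact hst
      have hd := hδ' s hsA.1 t htI habs
      have h1 : EMetric.infEdist yy (C t) ≤ EMetric.hausdorffEdist (C s) (C t) :=
        EMetric.infEdist_le_hausdorffEdist_of_mem (by rw [hsA.2]; exact mem_univ yy)
      obtain ⟨z, hz, hze⟩ := EMetric.infEdist_lt_iff.1 (lt_of_le_of_lt h1 hd)
      exact ⟨z, hz, edist_lt_ofReal.1 hze⟩
    rwa [(hclosed t htI).closure_eq] at hmem
  obtain ⟨δ₀, hδ₀, hδ₀'⟩ := hH (ρ/2) (by positivity)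
  set U : Set ℝ := ⋃ t ∈ A, ball t δ₀ with hU_def
  have hUopen : IsOpen U := isOpen_biUnion (fun _ _ => isOpen_ball)
  have hAU : A ⊆ U := fun t ht => mem_biUnion ht (mem_ball_self hδ₀)
  have hIccU : ∀ s ∈ Icc (0:ℝ) T, s ∈ U → s ∈ A := by
    intro s hs hsU
    obtain ⟨t, htA, hst⟩ := mem_iUnion₂.1 hsU
    refine ⟨hs, hmain s hs ?_⟩
    have habs : |s - t| < δ₀ := by rw [← Real.dist_eq]; exact hst
    have := hδ₀' s hs t htA.1 habs
    rwa [htA.2] at this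
  have hpc : IsPreconnected (Icc (0:ℝ) T) := isPreconnected_Icc
  by_contra hcon
  push_neg at hcon
  obtain ⟨t₁, ht₁, ht₁n⟩ := hcon
  have hne := hpc U Aᶜ hUopen hAclosed.isOpen_compl
    (fun u hu => by
      by_cases h : u ∈ A
      · exact Or.inl (hAU h)
      · exact Or.inr h)
    ⟨t₀, ht₀, hAU ht₀A⟩ ⟨t₁, ht₁, fun h => ht₁n h.2⟩
  obtain ⟨u, huI, huU, huA⟩ := hne
  exact huA (hIccU u huI huU)
end

section
/- Let H be a real Hilbert space and C : [0,T] ⇉ H a set-valued map satisfying conditions (H1) and (H2). Then the boundary map t ⇉ bd C(t) is Hausdorff-continuous on its domain: for every t ∈ [0,T] with bd C(t) ≠ ∅ and every ε > 0, there exists δ > 0 such that d_H(bd C(s), bd C(t)) < ε for every s ∈ [0,T] with |s − t| < δ and bd C(s) ≠ ∅. -/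
set_option maxHeartbeats 1000000

open Set Metric Filter Topology
open scoped ENNReal

lemma exists_frontier_seg {H : Type*} [NormedAddCommGroup H] [NormedSpace ℝ H]
    {S : Set H} (hS : IsClosed S) {x c : H} (hx : x ∉ S) (hc : c ∈ S) :
    ∃ z ∈ frontier S, dist x z ≤ dist x c := by
  set g : ℝ → H := fun θ => x + θ • (c - x) with hg
  have hgc : Continuous g := continuous_const.add (continuous_id.smul continuous_const)
  set K : Set ℝ := {θ | θ ∈ Icc (0:ℝ) 1 ∧ g θ ∈ S} with hK
  have hKne : (1:ℝ) ∈ K := by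
    constructor
    · exact ⟨zero_le_one, le_refl 1⟩
    · simp [hg]; simpa using hc
  have hKclosed : IsClosed K := (isClosed_Icc.inter (hS.preimage hgc))
  have hKbdd : BddBelow K := ⟨0, fun θ hθ => hθ.1.1⟩
  set θ₀ := sInf K with hθ₀
  have hθ₀K : θ₀ ∈ K := hKclosed.csInf_mem ⟨1, hKne⟩ hKbdd
  have hg0 : g 0 = x := by simp [hg]
  have hθ₀pos : 0 < θ₀ := by
    rcases lt_or_eq_of_le hθ₀K.1.1 with h | h
    · exact h
    · exfalso; apply hx; rw [← hg0, h]; exact hθ₀K.2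
  refine ⟨g θ₀, ?_, ?_⟩
  · rw [frontier, Set.mem_diff]
    constructor
    · exact subset_closure hθ₀K.2
    · intro hint
      rcases Metric.isOpen_iff.mp isOpen_interior _ hint with ⟨r, hr, hball⟩
      rcases Metric.continuous_iff.mp hgc θ₀ r hr with ⟨δ, hδ, hcont⟩
      set θ₁ := max 0 (θ₀ - δ/2) with hθ₁
      have h1 : θ₁ < θ₀ := by
        apply max_lt hθ₀pos; linarith
      have h2 : dist θ₁ θ₀ < δ := by
        rw [Real.dist_eq, abs_lt]
        constructor
        · have : θ₀ - δ/2 ≤ θ₁ := le_max_right _ _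
          linarith
        · linarith
      have h3 : g θ₁ ∈ S := interior_subset (hball (hcont θ₁ h2))
      have h4 : θ₁ ∈ K := ⟨⟨le_max_left _ _, le_trans (le_of_lt h1) hθ₀K.1.2⟩, h3⟩
      exact absurd (csInf_le hKbdd h4) (not_le.mpr h1)
  · have : dist x (g θ₀) = θ₀ * ‖c - x‖ := by
      rw [dist_eq_norm]
      simp [hg]
      rw [norm_smul, Real.norm_eq_abs, abs_of_nonneg (le_of_lt hθ₀pos)]
    rw [this, dist_eq_norm, ← norm_neg (x - c)]
    have h5 : -(x - c) = c - x := neg_sub x c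
    rw [h5]
    nlinarith [hθ₀K.1.2, norm_nonneg (c - x)]


lemma step_estimate {H : Type*} [NormedAddCommGroup H] [InnerProductSpace ℝ H]
    {y p q : H} {a t θ θ' : ℝ}
    (ha : ‖p - y‖ = a) (hta : 0 < t) (hle : t ≤ a)
    (hθ : 0 ≤ θ) (hθ' : 0 ≤ θ') (hθθ : θ' ≤ θ) (hθa : θ ≤ a)
    (hq1 : a - θ ≤ ‖q - y‖)
    (hq2 : ‖q - (y + (t / a) • (p - y))‖ ≤ a - t + θ') :
    ‖q - p‖ ^ 2 ≤ 5 * a ^ 2 * θ / t := by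
  have hapos : 0 < a := lt_of_lt_of_le hta hle
  set N := ‖q - y‖ ^ 2 with hN
  set S := (inner ℝ (q - y) (p - y) : ℝ) with hS
  have e1 : ‖q - p‖ ^ 2 = N - 2 * S + a ^ 2 := by
    have : q - p = (q - y) - (p - y) := by abel
    rw [this, norm_sub_sq_real, ha]
  have e2 : ‖q - (y + (t / a) • (p - y))‖ ^ 2 = N - 2 * ((t/a) * S) + (t/a)^2 * a^2 := by
    have : q - (y + (t / a) • (p - y)) = (q - y) - (t/a) • (p - y) := by
      rw [smul_sub]; abel
    rw [this, norm_sub_sq_real, real_inner_smul_right, norm_smul, Real.norm_eq_abs,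
      mul_pow, sq_abs, ha]
  have e2' : (t/a)^2 * a^2 = t^2 := by field_simp
  rw [e2'] at e2
  have i1 : (a - θ)^2 ≤ N := by
    rw [hN]; nlinarith [norm_nonneg (q - y)]
  have i2 : N - 2*((t/a)*S) + t^2 ≤ (a - t + θ')^2 := by
    rw [← e2]; nlinarith [norm_nonneg (q - (y + (t / a) • (p - y))), hq2]
  -- multiply i2 by a : a*N - 2*t*S + a*t^2 ≤ a*(a-t+θ')^2
  have i2' : a*N - 2*t*S + a*t^2 ≤ a*(a - t + θ')^2 := by
    have := mul_le_mul_of_nonneg_left i2 (le_of_lt hapos)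
    have ht' : a * (2*((t/a)*S)) = 2*t*S := by field_simp
    nlinarith [this]
  -- goal: t * ‖q-p‖^2 ≤ 5*a^2*θ
  have i1' : (0:ℝ) ≤ N - (a - θ)^2 := by linarith
  have step1 : t*(N - 2*S + a^2) ≤ N*(t-a) + a*(a-t+θ')^2 - a*t^2 + a^2*t := by
    linarith [i2']
  have step2 : N*(t-a) ≤ (a-θ)^2*(t-a) := by
    nlinarith [mul_nonneg i1' (sub_nonneg.mpr hle)]
  have hθ'a : θ' ≤ a := le_trans hθθ hθa
  have hsq : θ'^2 ≤ a*θ := by nlinarith [mul_le_mul hθθ hθ'a hθ' hθ]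
  have step3 : (a-θ)^2*(t-a) + a*(a-t+θ')^2 - a*t^2 + a^2*t ≤ 5*a^2*θ := by
    nlinarith [mul_nonneg (sub_nonneg.mpr hle) (sq_nonneg θ),
      mul_nonneg (mul_nonneg hapos.le hta.le) hθ,
      mul_nonneg (mul_nonneg hapos.le hta.le) hθ',
      mul_le_mul_of_nonneg_left hsq hapos.le,
      mul_le_mul_of_nonneg_left hθθ (mul_nonneg hapos.le hapos.le)]
  have key : t * (N - 2*S + a^2) ≤ 5*a^2*θ := by linarith
  rw [e1, le_div_iff₀ hta]
  nlinarith [key]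

lemma pushout {H : Type*} [NormedAddCommGroup H] [InnerProductSpace ℝ H]
    {C : Set H} {ρ : ℝ} (hρ : 0 < ρ) (hreg : UniformProxRegular ρ C)
    {p v : H} (hp : p ∈ C) (hproj : dist v p = Metric.infDist v C) (hpos : 0 < dist v p)
    {r : ℝ} (hr : 0 < r) (hrρ : r ≤ ρ) :
    ∀ c ∈ C, r ≤ dist (p + (r / dist v p) • (v - p)) c := by
  set ζ := v - p with hζ
  have hζnorm : ‖ζ‖ = dist v p := by rw [hζ, ← dist_eq_norm]
  have hcone : ζ ∈ proxNormalCone C p := by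
    refine ⟨1/2, by norm_num, fun y hy => ?_⟩
    have h1 : dist v p ≤ dist v y := by rw [hproj]; exact Metric.infDist_le_dist_of_mem hy
    have h2 : ‖v - y‖ ^ 2 = ‖ζ‖ ^ 2 - 2 * (inner ℝ ζ (y - p) : ℝ) + ‖y - p‖ ^ 2 := by
      have : v - y = ζ - (y - p) := by rw [hζ]; abel
      rw [this, norm_sub_sq_real]
    have h3 : ‖ζ‖ ≤ ‖v - y‖ := by
      rw [hζnorm, ← dist_eq_norm] at *; exact h1
    nlinarith [norm_nonneg (v - y), norm_nonneg ζ]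
  intro c hc
  have hkey := hreg p hp ζ hcone c hc
  set z := p + (r / dist v p) • ζ with hz
  have hzc : z - c = (r / dist v p) • ζ - (c - p) := by rw [hz]; abel
  have hn : ‖z - c‖ ^ 2 = (r / dist v p) ^ 2 * ‖ζ‖ ^ 2
      - 2 * ((r / dist v p) * (inner ℝ ζ (c - p) : ℝ)) + ‖c - p‖ ^ 2 := by
    rw [hzc, norm_sub_sq_real, real_inner_smul_left, norm_smul, Real.norm_eq_abs,
      mul_pow, sq_abs]
  have hrd : (r / dist v p) * ‖ζ‖ = r := by
    rw [hζnorm]; field_simp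
  have h4 : ‖z - c‖ ^ 2 ≥ r ^ 2 := by
    have h5 : (inner ℝ ζ (c - p) : ℝ) ≤ ‖ζ‖ / (2 * ρ) * ‖c - p‖ ^ 2 := hkey
    have h6 : 0 < ‖ζ‖ := by rw [hζnorm]; exact hpos
    have h7 : (r / dist v p) ^ 2 * ‖ζ‖ ^ 2 = r ^ 2 := by
      rw [← mul_pow, hrd]
    rw [hn, h7]
    have h8 : (r / dist v p) * (inner ℝ ζ (c - p) : ℝ) ≤ r / (2 * ρ) * ‖c - p‖ ^ 2 := by
      have h9 : (r / dist v p) * ((inner ℝ ζ (c - p)) : ℝ) ≤ (r / dist v p) * (‖ζ‖ / (2 * ρ) * ‖c - p‖ ^ 2) := by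
        apply mul_le_mul_of_nonneg_left h5
        positivity
      calc (r / dist v p) * ((inner ℝ ζ (c - p)) : ℝ) ≤ (r / dist v p) * (‖ζ‖ / (2 * ρ) * ‖c - p‖ ^ 2) := h9
        _ = ((r / dist v p) * ‖ζ‖) / (2*ρ) * ‖c - p‖ ^ 2 := by ring
        _ = r / (2 * ρ) * ‖c - p‖ ^ 2 := by rw [hrd]
    have h10 : r / (2*ρ) * ‖c - p‖^2 ≤ 1/2 * ‖c - p‖^2 := by
      apply mul_le_mul_of_nonneg_right _ (sq_nonneg _)
      rw [div_le_div_iff₀ (by linarith) (by norm_num)]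
      linarith
    nlinarith
  rw [dist_eq_norm]
  nlinarith [norm_nonneg (z - c), h4]

lemma exists_nearest {H : Type*} [NormedAddCommGroup H] [InnerProductSpace ℝ H] [CompleteSpace H]
    {C : Set H} (hC : IsClosed C) (hCne : C.Nonempty) {y : H} (hy : y ∉ C)
    {δ : ℝ} (hδ : 0 < δ) :
    ∃ v p, p ∈ C ∧ dist v y ≤ δ ∧ dist v p = Metric.infDist v C ∧ 0 < dist v p := by
  set d := Metric.infDist y C with hd
  have hdpos : 0 < d := (hC.notMem_iff_infDist_pos hCne).mp hy
  set τ := min δ d / 4 with hτ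
  have hτpos : 0 < τ := by
    have := lt_min hδ hdpos; rw [hτ]; linarith
  have hτδ : τ ≤ δ / 4 := by
    rw [hτ]; have := min_le_left δ d; linarith
  have hτd : τ ≤ d / 4 := by
    rw [hτ]; have := min_le_right δ d; linarith
  set t : ℕ → ℝ := fun n => τ * (1/2)^n with ht
  set θ : ℕ → ℝ := fun n => τ * (1/8)^(n+1) with hθdef
  have htpos : ∀ n, 0 < t n := fun n => by positivity
  have hθpos : ∀ n, 0 < θ n := fun n => by positivity
  have htτ : ∀ n, t n ≤ τ := by
    intro n
    show τ * (1/2)^n ≤ τ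
    have : ((1:ℝ)/2)^n ≤ 1 := pow_le_one₀ (by norm_num) (by norm_num)
    nlinarith
  have hθt : ∀ n, θ n ≤ t n := by
    intro n
    show τ * (1/8)^(n+1) ≤ τ * (1/2)^n
    have h8 : ((1:ℝ)/8)^(n+1) ≤ (1/2)^n := by
      calc ((1:ℝ)/8)^(n+1) ≤ (1/8)^n := by
            apply pow_le_pow_of_le_one (by norm_num) (by norm_num); omega
        _ ≤ (1/2)^n := by
            apply pow_le_pow_left₀ (by norm_num) (by norm_num)
    nlinarith
  have hθτ : ∀ n, θ n ≤ τ := fun n => le_trans (hθt n) (htτ n)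
  have hpick : ∀ (v : H) (n : ℕ), ∃ p, p ∈ C ∧ dist v p < Metric.infDist v C + θ n := by
    intro v n
    obtain ⟨p, hp1, hp2⟩ := (Metric.infDist_lt_iff hCne
      (x := v) (r := Metric.infDist v C + θ n)).mp (by linarith [hθpos n])
    exact ⟨p, hp1, hp2⟩
  choose P hPmem hPdist using hpick
  set Y : ℕ → H := fun n => Nat.rec (motive := fun _ => H) y
    (fun k v => v + ((t k) / dist v (P v k)) • (P v k - v)) n with hY
  have hY0 : Y 0 = y := rfl
  have hYsucc : ∀ n, Y (n+1) = Y n + ((t n) / dist (Y n) (P (Y n) n)) • (P (Y n) n - Y n) :=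
    fun n => rfl
  set p : ℕ → H := fun n => P (Y n) n with hp
  set a : ℕ → ℝ := fun n => dist (Y n) (p n) with ha
  set D : ℕ → ℝ := fun n => Metric.infDist (Y n) C with hD
  have hDa : ∀ n, D n ≤ a n := fun n => Metric.infDist_le_dist_of_mem (hPmem (Y n) n)
  have haD : ∀ n, a n < D n + θ n := fun n => hPdist (Y n) n
  have hstep : ∀ n, d/2 ≤ D n →
      dist (Y (n+1)) (Y n) = t n ∧ dist (Y (n+1)) (p n) = a n - t n := by
    intro n hn
    have hapos : 0 < a n := lt_of_lt_of_le (by linarith) (hDa n)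
    have hta : t n ≤ a n := by
      calc t n ≤ τ := htτ n
        _ ≤ d/4 := hτd
        _ ≤ d/2 := by linarith
        _ ≤ D n := hn
        _ ≤ a n := hDa n
    have hane : dist (Y n) (P (Y n) n) ≠ 0 := ne_of_gt hapos
    constructor
    · rw [hYsucc n, dist_eq_norm, add_sub_cancel_left, norm_smul, Real.norm_eq_abs,
        abs_of_nonneg (div_nonneg (htpos n).le hapos.le)]
      have hn2 : ‖P (Y n) n - Y n‖ = dist (Y n) (P (Y n) n) := by
        rw [dist_comm, dist_eq_norm]
      rw [hn2]
      field_simp; rfl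
    · rw [hYsucc n, dist_eq_norm]
      show ‖Y n + ((t n) / dist (Y n) (P (Y n) n)) • (P (Y n) n - Y n) - P (Y n) n‖
        = dist (Y n) (P (Y n) n) - t n
      have h1 : Y n + ((t n) / dist (Y n) (P (Y n) n)) • (P (Y n) n - Y n) - P (Y n) n
          = (1 - t n / dist (Y n) (P (Y n) n)) • (Y n - P (Y n) n) := by
        module
      rw [h1, norm_smul, Real.norm_eq_abs]
      have hfrac : t n / dist (Y n) (P (Y n) n) ≤ 1 := by
        rw [div_le_one hapos]; exact hta
      rw [abs_of_nonneg (by linarith)]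
      have hn2 : ‖Y n - P (Y n) n‖ = dist (Y n) (P (Y n) n) := (dist_eq_norm _ _).symm
      rw [hn2]
      field_simp
  have hinv : ∀ n, d - 2*τ*(1 - (1/2)^n) ≤ D n ∧ D n ≤ d := by
    intro n
    induction n with
    | zero =>
      constructor
      · show d - 2*τ*(1 - (1/2)^0) ≤ d
        norm_num
      · exact le_refl d
    | succ n ih =>
      have hlow : d/2 ≤ D n := by
        have h1 : (0:ℝ) ≤ (1/2:ℝ)^n := by positivity
        nlinarith [ih.1, hτd]
      obtain ⟨hs1, hs2⟩ := hstep n hlow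
      constructor
      · have h1 : D n ≤ D (n+1) + dist (Y n) (Y (n+1)) :=
          Metric.infDist_le_infDist_add_dist
        rw [dist_comm, hs1] at h1
        have h3 : d - 2*τ*(1 - (1/2)^(n+1)) = d - 2*τ*(1 - (1/2)^n) - t n := by
          show d - 2*τ*(1 - (1/2)^(n+1)) = d - 2*τ*(1 - (1/2)^n) - τ * (1/2)^n
          rw [pow_succ]; ring
        rw [h3]
        linarith [ih.1]
      · have h1 : D (n+1) ≤ dist (Y (n+1)) (p n) :=
          Metric.infDist_le_dist_of_mem (hPmem (Y n) n)
        rw [hs2] at h1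
        have h4 := haD n
        have h5 := hθt n
        linarith [ih.2]
  have hDd2 : ∀ n, d/2 ≤ D n := by
    intro n
    have h1 : (0:ℝ) ≤ (1/2:ℝ)^n := by positivity
    nlinarith [(hinv n).1, hτd]
  have hYdist : ∀ n, dist (Y (n+1)) (Y n) = t n := fun n => (hstep n (hDd2 n)).1
  have hpest : ∀ n, dist (p n) (p (n+1)) ≤ 2*d*(1/2)^n := by
    intro n
    have hDn := hDd2 n
    have hapos : 0 < a n := lt_of_lt_of_le (by linarith) (hDa n)
    have h2d : a n ≤ 2*d := by
      have h6 := haD n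
      have h7 := (hinv n).2
      have h8 := hθτ n
      nlinarith [hτd]
    have hta : t n ≤ a n := by
      calc t n ≤ τ := htτ n
        _ ≤ d/4 := hτd
        _ ≤ d/2 := by linarith
        _ ≤ D n := hDn
        _ ≤ a n := hDa n
    have hθa : θ n ≤ a n := by
      calc θ n ≤ t n := hθt n
        _ ≤ a n := hta
    have hθθ' : θ (n+1) ≤ θ n := by
      show τ * (1/8)^(n+1+1) ≤ τ * (1/8)^(n+1)
      have : ((1:ℝ)/8)^(n+1+1) ≤ (1/8)^(n+1) := by
        apply pow_le_pow_of_le_one (by norm_num) (by norm_num); omega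
      nlinarith
    have hanorm : ‖p n - Y n‖ = a n := by
      rw [← dist_eq_norm, dist_comm]
    have hq1 : a n - θ n ≤ ‖p (n+1) - Y n‖ := by
      have h1 : D n ≤ dist (Y n) (p (n+1)) :=
        Metric.infDist_le_dist_of_mem (hPmem (Y (n+1)) (n+1))
      rw [dist_comm, dist_eq_norm] at h1
      have := haD n
      linarith
    have hq2 : ‖p (n+1) - (Y n + (t n / a n) • (p n - Y n))‖ ≤ a n - t n + θ (n+1) := by
      have hYn1 : Y (n+1) = Y n + (t n / a n) • (p n - Y n) := hYsucc n
      rw [← hYn1]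
      have h1 : dist (Y (n+1)) (p (n+1)) < D (n+1) + θ (n+1) := haD (n+1)
      have h2 : D (n+1) ≤ a n - t n := by
        have h9 : D (n+1) ≤ dist (Y (n+1)) (p n) :=
          Metric.infDist_le_dist_of_mem (hPmem (Y n) n)
        rw [(hstep n hDn).2] at h9
        exact h9
      rw [dist_eq_norm] at h1
      have h10 : ‖p (n+1) - Y (n+1)‖ = ‖Y (n+1) - p (n+1)‖ := norm_sub_rev _ _
      rw [h10]
      linarith
    have hmain := step_estimate hanorm (htpos n) hta (hθpos n).le (hθpos (n+1)).le hθθ' hθa hq1 hq2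
    have hrhs : 5 * (a n) ^ 2 * θ n / t n ≤ (2*d*(1/2)^n)^2 := by
      have hratio : θ n / t n = (1/8) * (1/4)^n := by
        show τ * (1/8)^(n+1) / (τ * (1/2)^n) = (1/8) * (1/4)^n
        have h8 : ((1:ℝ)/8)^(n+1) = (1/4)^n * (1/2)^n * (1/8) := by
          rw [pow_succ, ← mul_pow]; norm_num
        rw [h8]
        have h1 : τ ≠ 0 := ne_of_gt hτpos
        have h2 : ((1:ℝ)/2)^n ≠ 0 := by positivity
        field_simp
      have h1 : 5 * (a n) ^ 2 * θ n / t n = 5 * (a n)^2 * (θ n / t n) := by ring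
      rw [h1, hratio]
      have hq : ((1:ℝ)/2)^n * ((1:ℝ)/2)^n = ((1:ℝ)/4)^n := by
        rw [← mul_pow]; norm_num
      have h2 : (2*d*(1/2)^n)^2 = 32*d^2*((1/8) * (1/4)^n) := by
        rw [← hq]; ring
      rw [h2]
      have h3 : (a n)^2 ≤ 4*d^2 := by nlinarith
      have h4 : (0:ℝ) < (1/8:ℝ) * (1/4)^n := by positivity
      nlinarith
    have hfin : ‖p (n+1) - p n‖^2 ≤ (2*d*(1/2)^n)^2 := le_trans hmain hrhs
    rw [dist_comm, dist_eq_norm]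
    have h5 : (0:ℝ) ≤ 2*d*(1/2)^n := by positivity
    nlinarith [norm_nonneg (p (n+1) - p n)]
  have hYcauchy : CauchySeq Y := by
    apply cauchySeq_of_le_geometric (1/2) τ (by norm_num)
    intro n
    rw [dist_comm, hYdist n]
  have hpcauchy : CauchySeq p :=
    cauchySeq_of_le_geometric (1/2) (2*d) (by norm_num) hpest
  obtain ⟨v, hv⟩ := cauchySeq_tendsto_of_complete hYcauchy
  obtain ⟨pl, hpl⟩ := cauchySeq_tendsto_of_complete hpcauchy
  have hplC : pl ∈ C :=
    hC.mem_of_tendsto hpl (Filter.Eventually.of_forall (fun n => hPmem (Y n) n))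
  have hYy : ∀ n, dist (Y n) y ≤ 2*τ := by
    intro n
    have key : ∀ m, dist (Y m) y ≤ 2*τ*(1 - (1/2)^m) := by
      intro m
      induction m with
      | zero =>
        show dist y y ≤ 2*τ*(1 - (1/2)^0)
        norm_num
      | succ m ih =>
        calc dist (Y (m+1)) y ≤ dist (Y (m+1)) (Y m) + dist (Y m) y := dist_triangle _ _ _
          _ ≤ t m + 2*τ*(1 - (1/2)^m) := by linarith [le_of_eq (hYdist m)]
          _ = 2*τ*(1 - (1/2)^(m+1)) := by
              show τ * (1/2)^m + 2*τ*(1 - (1/2)^m) = 2*τ*(1 - (1/2)^(m+1))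
              rw [pow_succ]; ring
    have h1 : (0:ℝ) ≤ (1/2:ℝ)^n := by positivity
    nlinarith [key n]
  have hvy2 : dist v y ≤ 2*τ := by
    have hlim : Tendsto (fun n => dist (Y n) y) atTop (𝓝 (dist v y)) :=
      hv.dist tendsto_const_nhds
    exact le_of_tendsto hlim (Filter.Eventually.of_forall hYy)
  have hvy : dist v y ≤ δ := by linarith [hτδ]
  have hDlim : Tendsto (fun n => Metric.infDist (Y n) C) atTop (𝓝 (Metric.infDist v C)) :=
    ((Metric.continuous_infDist_pt C).tendsto v).comp hv
  have halim : Tendsto (fun n => dist (Y n) (p n)) atTop (𝓝 (dist v pl)) := hv.dist hpl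
  have hθlim : Tendsto θ atTop (𝓝 0) := by
    have h1 : Tendsto (fun n : ℕ => ((1:ℝ)/8)^n) atTop (𝓝 0) :=
      tendsto_pow_atTop_nhds_zero_of_lt_one (by norm_num) (by norm_num)
    have h2 : Tendsto (fun n : ℕ => (τ * (1/8)) * (1/8)^n) atTop (𝓝 ((τ * (1/8)) * 0)) :=
      h1.const_mul _
    have h3 : (fun n : ℕ => τ * ((1:ℝ)/8)^(n+1)) = fun n : ℕ => (τ * (1/8)) * (1/8)^n := by
      funext n; rw [pow_succ]; ring
    show Tendsto (fun n : ℕ => τ * ((1:ℝ)/8)^(n+1)) atTop (𝓝 0)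
    rw [h3]
    simpa using h2
  have hdiff : Tendsto (fun n => dist (Y n) (p n) - D n) atTop (𝓝 0) :=
    squeeze_zero (fun n => by linarith [hDa n]) (fun n => by linarith [haD n]) hθlim
  have heq : dist v pl = Metric.infDist v C := by
    have h1 : Tendsto (fun n => dist (Y n) (p n) - D n) atTop
        (𝓝 (dist v pl - Metric.infDist v C)) := halim.sub hDlim
    have h2 := tendsto_nhds_unique h1 hdiff
    linarith
  refine ⟨v, pl, hplC, hvy, heq, ?_⟩
  rw [heq]
  have h1 : Metric.infDist y C ≤ Metric.infDist v C + dist y v :=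
    Metric.infDist_le_infDist_add_dist
  rw [dist_comm] at h1
  have h2 : 2*τ ≤ d/2 := by linarith [hτd]
  have h3 : d ≤ Metric.infDist v C + 2*τ := by
    calc d = Metric.infDist y C := hd
      _ ≤ Metric.infDist v C + dist v y := h1
      _ ≤ Metric.infDist v C + 2*τ := by linarith [hvy2]
  linarith


lemma key_frontier_step {H : Type*} [NormedAddCommGroup H] [InnerProductSpace ℝ H]
    [CompleteSpace H] {C₁ C₂ : Set H} {ρ ε : ℝ} (hρ : 0 < ρ) (hε : 0 < ε)
    (h1c : IsClosed C₁) (h1n : C₁.Nonempty) (h1r : UniformProxRegular ρ C₁)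
    (h2c : IsClosed C₂)
    (hH : EMetric.hausdorffEdist C₁ C₂ < ENNReal.ofReal (min ρ (ε/8) / 8))
    {x : H} (hx : x ∈ frontier C₁) :
    ∃ f ∈ frontier C₂, dist x f ≤ 3*ε/4 := by
  set r := min ρ (ε/8) with hr
  have hrpos : 0 < r := lt_min hρ (by linarith)
  set η := r / 8 with hη
  have hηpos : 0 < η := by rw [hη]; linarith
  have hrρ : r ≤ ρ := min_le_left _ _
  have hrε : r ≤ ε/8 := min_le_right _ _
  have hxC₁ : x ∈ C₁ := h1c.frontier_subset hx
  have hnear : ∀ z ∈ C₁, ∃ c ∈ C₂, dist z c < η := by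
    intro z hz
    have h1 : EMetric.infEdist z C₂ < ENNReal.ofReal η :=
      lt_of_le_of_lt (EMetric.infEdist_le_hausdorffEdist_of_mem hz) hH
    obtain ⟨c, hc1, hc2⟩ := EMetric.infEdist_lt_iff.mp h1
    exact ⟨c, hc1, edist_lt_ofReal.mp hc2⟩
  have hnear' : ∀ w ∈ C₂, ∃ c ∈ C₁, dist w c < η := by
    intro w hw
    have h1 : EMetric.infEdist w C₁ < ENNReal.ofReal η := by
      rw [show EMetric.hausdorffEdist C₁ C₂ = EMetric.hausdorffEdist C₂ C₁ from Metric.hausdorffEDist_comm] at hH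
      exact lt_of_le_of_lt (EMetric.infEdist_le_hausdorffEdist_of_mem hw) hH
    obtain ⟨c, hc1, hc2⟩ := EMetric.infEdist_lt_iff.mp h1
    exact ⟨c, hc1, edist_lt_ofReal.mp hc2⟩
  by_cases hxC₂ : x ∈ C₂
  · by_cases hball : ∃ w, dist w x < ε/4 ∧ w ∉ C₂
    · obtain ⟨w, hw1, hw2⟩ := hball
      obtain ⟨f, hf1, hf2⟩ := exists_frontier_seg h2c hw2 hxC₂
      refine ⟨f, hf1, ?_⟩
      calc dist x f ≤ dist x w + dist w f := dist_triangle _ _ _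
        _ ≤ dist x w + dist w x := by linarith
        _ = 2 * dist w x := by rw [dist_comm x w]; ring
        _ ≤ 3*ε/4 := by linarith
    · exfalso
      push_neg at hball
      -- a point outside C₁ near x
      have hxcl : x ∈ closure C₁ᶜ := by
        rw [frontier_eq_closure_inter_closure] at hx
        exact hx.2
      obtain ⟨y, hy1, hy2⟩ := Metric.mem_closure_iff.mp hxcl η hηpos
      have hyC₁ : y ∉ C₁ := hy1
      obtain ⟨v, p, hpC₁, hvy, hproj, hpos⟩ := exists_nearest h1c h1n hyC₁ hηpos
      have hzfar := pushout hρ h1r hpC₁ hproj hpos hrpos hrρ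
      set z := p + (r / dist v p) • (v - p) with hz
      have hdzp : dist z p = r := by
        rw [hz, dist_comm, dist_eq_norm]
        have h1 : p - (p + (r / dist v p) • (v - p)) = -((r / dist v p) • (v - p)) := by
          abel
        rw [h1, norm_neg, norm_smul, Real.norm_eq_abs,
          abs_of_nonneg (div_nonneg hrpos.le dist_nonneg)]
        rw [← dist_eq_norm v p]
        field_simp
      have hdvp : dist v p < 2*η := by
        rw [hproj]
        have h1 : Metric.infDist v C₁ ≤ Metric.infDist y C₁ + dist v y :=
          Metric.infDist_le_infDist_add_dist
        have h2 : Metric.infDist y C₁ ≤ dist y x := Metric.infDist_le_dist_of_mem hxC₁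
        rw [dist_comm] at hy2
        linarith
      have hdvx : dist v x < 2*η := by
        calc dist v x ≤ dist v y + dist y x := dist_triangle _ _ _
          _ < η + η := by rw [dist_comm] at hy2; linarith
          _ = 2*η := by ring
      have hdzx : dist z x < ε/4 := by
        have h1 : dist z x ≤ dist z p + dist p v + dist v x := dist_triangle4 _ _ _ _
        have h2 : dist p v = dist v p := dist_comm _ _
        have h3 : dist z x ≤ r + 4*η := by
          rw [hdzp] at h1; rw [h2] at h1; linarith
        have h4 : r + 4*η = (3/2)*r := by rw [hη]; ring
        have h5 : (3/2)*r ≤ (3/2)*(ε/8) := by linarith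
        linarith
      have hzC₂ : z ∈ C₂ := hball z hdzx
      obtain ⟨c, hcC₁, hc⟩ := hnear' z hzC₂
      have := hzfar c hcC₁
      have hηr : η < r := by rw [hη]; linarith
      linarith
  · obtain ⟨c, hcC₂, hc⟩ := hnear x hxC₁
    obtain ⟨f, hf1, hf2⟩ := exists_frontier_seg h2c hxC₂ hcC₂
    refine ⟨f, hf1, ?_⟩
    have hη3 : η ≤ 3*ε/4 := by
      rw [hη]
      linarith
    linarith

theorem stmt5 {H : Type*} [NormedAddCommGroup H] [InnerProductSpace ℝ H] [CompleteSpace H]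
    (T : ℝ) (hT : 0 < T) (C : ℝ → Set H)
    (ρ : ℝ) (hρ : 0 < ρ)
    (hH1 : ∀ t ∈ Icc (0:ℝ) T, (C t).Nonempty ∧ IsClosed (C t) ∧ UniformProxRegular ρ (C t))
    (hH2 : HausdorffCts T C) :
    ∀ t ∈ Icc (0:ℝ) T, (frontier (C t)).Nonempty → ∀ ε > 0, ∃ δ > 0,
      ∀ s ∈ Icc (0:ℝ) T, |s - t| < δ → (frontier (C s)).Nonempty →
        EMetric.hausdorffEdist (frontier (C s)) (frontier (C t)) < ENNReal.ofReal ε := by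
  intro t ht hft ε hε
  have hηpos : 0 < min ρ (ε/8) / 8 := by
    have := lt_min hρ (by linarith : (0:ℝ) < ε/8)
    linarith
  obtain ⟨δ, hδpos, hδ⟩ := hH2 (min ρ (ε/8) / 8) hηpos
  refine ⟨δ, hδpos, ?_⟩
  intro s hs hst hfs
  have hHst : EMetric.hausdorffEdist (C s) (C t) < ENNReal.ofReal (min ρ (ε/8) / 8) :=
    hδ s hs t ht hst
  have hHts : EMetric.hausdorffEdist (C t) (C s) < ENNReal.ofReal (min ρ (ε/8) / 8) := by
    rw [show EMetric.hausdorffEdist (C t) (C s) = EMetric.hausdorffEdist (C s) (C t) from Metric.hausdorffEDist_comm]; exact hHst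
  obtain ⟨hsne, hsc, hsr⟩ := hH1 s hs
  obtain ⟨htne, htc, htr⟩ := hH1 t ht
  have hbound : EMetric.hausdorffEdist (frontier (C s)) (frontier (C t))
      ≤ ENNReal.ofReal (3*ε/4) := by
    apply EMetric.hausdorffEdist_le_of_infEdist
    · intro x hx
      obtain ⟨f, hf1, hf2⟩ := key_frontier_step hρ hε hsc hsne hsr htc hHst hx
      calc EMetric.infEdist x (frontier (C t)) ≤ edist x f :=
            EMetric.infEdist_le_edist_of_mem hf1
        _ ≤ ENNReal.ofReal (3*ε/4) := by
            rw [edist_dist]; exact ENNReal.ofReal_le_ofReal hf2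
    · intro x hx
      obtain ⟨f, hf1, hf2⟩ := key_frontier_step hρ hε htc htne htr hsc hHts hx
      calc EMetric.infEdist x (frontier (C s)) ≤ edist x f :=
            EMetric.infEdist_le_edist_of_mem hf1
        _ ≤ ENNReal.ofReal (3*ε/4) := by
            rw [edist_dist]; exact ENNReal.ofReal_le_ofReal hf2
  apply lt_of_le_of_lt hbound
  rw [ENNReal.ofReal_lt_ofReal_iff hε]
  linarith
end

section
/- Let H be a real Hilbert space, C ⊆ H a closed set, and x a point of the topological boundary of C. Suppose there exist r > 0, L > 0 and z ∈ H such that co({x} ∪ B_{2r}(z)) ⊆ C and ‖z − x‖ ≤ Lr, where B_{2r}(z) is the open ball of radius 2r centered at z and co denotes the convex hull. Then z ≠ x and, for every v ∈ N^P(C; x), one has ⟨v, (z − x)/‖z − x‖⟩ ≤ −‖v‖/L. -/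
open Set Metric

theorem stmt8 {H : Type*} [NormedAddCommGroup H] [InnerProductSpace ℝ H] [CompleteSpace H]
    (C : Set H) (hC : IsClosed C) (x : H) (hx : x ∈ frontier C)
    (r L : ℝ) (hr : 0 < r) (hL : 0 < L) (z : H)
    (hco : convexHull ℝ ({x} ∪ ball z (2 * r)) ⊆ C)
    (hz : ‖z - x‖ ≤ L * r) :
    z ≠ x ∧ ∀ v ∈ proxNormalCone C x,
      (inner ℝ v (‖z - x‖⁻¹ • (z - x)) : ℝ) ≤ -‖v‖ / L := by
  have hzx : z ≠ x := by
    intro h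
    rw [h] at hco
    have : x ∈ interior C := by
      rw [mem_interior]
      exact ⟨ball x (2 * r), fun y hy => hco (subset_convexHull ℝ _ (Or.inr hy)),
        isOpen_ball, mem_ball_self (by positivity)⟩
    exact hx.2 this
  refine ⟨hzx, ?_⟩
  intro v hv
  obtain ⟨σ, hσ, hineq⟩ := hv
  have hd : 0 < ‖z - x‖ := by
    rw [norm_pos_iff]; exact sub_ne_zero.mpr hzx
  have key : ∀ s : H, ‖s‖ < 2 * r → (inner ℝ v (z - x + s) : ℝ) ≤ 0 := by
    intro s hs
    have hmem : ∀ t : ℝ, 0 < t → t ≤ 1 → x + t • (z - x + s) ∈ C := by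
      intro t ht ht1
      apply hco
      have hzs : z + s ∈ ball z (2 * r) := by
        simpa [mem_ball, dist_eq_norm] using hs
      have h1 : x ∈ convexHull ℝ ({x} ∪ ball z (2 * r)) :=
        subset_convexHull ℝ _ (mem_union_left _ rfl)
      have h2 : z + s ∈ convexHull ℝ ({x} ∪ ball z (2 * r)) :=
        subset_convexHull ℝ _ (mem_union_right _ hzs)
      have heq : x + t • (z - x + s) = (1 - t) • x + t • (z + s) := by module
      rw [heq]
      exact (convex_convexHull ℝ _) h1 h2 (by linarith) ht.le (by ring)
    by_contra hlt
    push_neg at hlt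
    set w := z - x + s with hw
    set c := (inner ℝ v w : ℝ) with hc
    have hden : 0 < σ * ‖w‖ ^ 2 + 1 := by positivity
    set t := min 1 (c / (σ * ‖w‖ ^ 2 + 1)) with ht
    have ht0 : 0 < t := lt_min one_pos (div_pos hlt hden)
    have h1 := hineq _ (hmem t ht0 (min_le_left _ _))
    rw [show x + t • w - x = t • w by abel, real_inner_smul_right, norm_smul,
      Real.norm_eq_abs, abs_of_pos ht0] at h1
    have hc1 : c ≤ σ * t * ‖w‖ ^ 2 := by nlinarith
    have htle : t ≤ c / (σ * ‖w‖ ^ 2 + 1) := min_le_right _ _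
    have hg : (c / (σ * ‖w‖ ^ 2 + 1)) * (σ * ‖w‖ ^ 2 + 1) = c :=
      div_mul_cancel₀ c hden.ne'
    nlinarith [sq_nonneg ‖w‖, div_pos hlt hden]
  have key2 : (inner ℝ v (z - x) : ℝ) ≤ -(2 * r) * ‖v‖ := by
    rcases eq_or_ne v 0 with rfl | hv0
    · simp
    · have hv0' : 0 < ‖v‖ := norm_pos_iff.mpr hv0
      apply le_of_forall_pos_le_add
      intro ε hε
      set c := min ε (2 * r * ‖v‖) with hcdef
      have hc0 : 0 < c := lt_min hε (by positivity)
      have hnum : 0 ≤ 2 * r * ‖v‖ - c := by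
        have := min_le_right ε (2 * r * ‖v‖); linarith
      set s := ((2 * r * ‖v‖ - c) / ‖v‖ ^ 2) • v with hsdef
      have hs : ‖s‖ < 2 * r := by
        rw [hsdef, norm_smul, Real.norm_eq_abs, abs_of_nonneg (by positivity)]
        rw [div_mul_eq_mul_div, sq]
        rw [div_lt_iff₀ (by positivity)]
        nlinarith
      have h2 := key s hs
      rw [inner_add_right, hsdef, real_inner_smul_right, real_inner_self_eq_norm_sq,
        div_mul_cancel₀ _ (by positivity : (‖v‖ : ℝ) ^ 2 ≠ 0)] at h2
      have : c ≤ ε := min_le_left _ _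
      linarith
  rw [real_inner_smul_right, inv_mul_le_iff₀ hd]
  have hq : 0 ≤ ‖v‖ / L := by positivity
  have hLq : L * (‖v‖ / L) = ‖v‖ := mul_div_cancel₀ _ hL.ne'
  have hdq := mul_le_mul_of_nonneg_right hz hq
  have h3 : L * r * (‖v‖ / L) = r * ‖v‖ := by field_simp
  have hneg : -‖v‖ / L = -(‖v‖ / L) := neg_div _ _
  have := norm_nonneg v
  nlinarith
end

section
/- Let H be a finite-dimensional real Hilbert space and C : [0,T] ⇉ H a set-valued map satisfying conditions (H1) and (H2). Let ξ̄ ∈ H, t̄ ∈ [0,T] and x̄ ∈ C(t̄). Then for all sequences ξ_n → ξ̄ in H, t_n → t̄ in [0,T], and x_n → x̄ with x_n ∈ C(t_n) for every n, one has limsup_{n→∞} σ(ξ_n; N^P(C(t_n); x_n) ∩ 𝕊) ≤ σ(ξ̄; N^P(C(t̄); x̄) ∩ 𝕊), where the support functions are understood in the extended reals. -/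
open Set Metric Filter
open scoped ENNReal Topology

/-- The support function of a set `A` at `ξ`, valued in the extended reals
(with `σ(ξ; ∅) = ⊥ = -∞`). -/
noncomputable def suppFn {H : Type*} [NormedAddCommGroup H] [InnerProductSpace ℝ H]
    (ξ : H) (A : Set H) : EReal :=
  ⨆ v ∈ A, ((inner ℝ ξ v : ℝ) : EReal)

theorem stmt9 {H : Type*} [NormedAddCommGroup H] [InnerProductSpace ℝ H]
    [FiniteDimensional ℝ H]
    (T : ℝ) (hT : 0 < T) (C : ℝ → Set H)
    (ρ : ℝ) (hρ : 0 < ρ)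
    (hH1 : ∀ t ∈ Icc (0:ℝ) T, (C t).Nonempty ∧ IsClosed (C t) ∧ UniformProxRegular ρ (C t))
    (hH2 : HausdorffCts T C)
    (ξbar : H) (tbar : ℝ) (htbar : tbar ∈ Icc (0:ℝ) T) (xbar : H) (hxbar : xbar ∈ C tbar)
    (ξ : ℕ → H) (t : ℕ → ℝ) (x : ℕ → H)
    (ht : ∀ n, t n ∈ Icc (0:ℝ) T) (hx : ∀ n, x n ∈ C (t n))
    (hξlim : Tendsto ξ atTop (nhds ξbar))
    (htlim : Tendsto t atTop (nhds tbar))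
    (hxlim : Tendsto x atTop (nhds xbar)) :
    limsup (fun n => suppFn (ξ n) (proxNormalCone (C (t n)) (x n) ∩ sphere (0:H) 1)) atTop ≤
      suppFn ξbar (proxNormalCone (C tbar) xbar ∩ sphere (0:H) 1) := by
  by_contra hcon
  push_neg at hcon
  obtain ⟨r, hr1, hr2⟩ := EReal.exists_between_coe_real hcon
  have hfreq : ∃ᶠ n in atTop,
      (r : EReal) < suppFn (ξ n) (proxNormalCone (C (t n)) (x n) ∩ sphere (0:H) 1) :=
    Filter.frequently_lt_of_lt_limsup Filter.isCobounded_le_of_bot hr2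
  obtain ⟨φ, hφmono, hφ⟩ := Filter.extraction_of_frequently_atTop hfreq
  -- choose ζ k on the sphere with large inner ℝ product
  have hζex : ∀ k, ∃ ζ, ζ ∈ proxNormalCone (C (t (φ k))) (x (φ k)) ∩ sphere (0:H) 1 ∧
      r < (inner ℝ (ξ (φ k)) ζ : ℝ) := by
    intro k
    have h := hφ k
    simp only [suppFn, lt_iSup_iff] at h
    obtain ⟨v, hv, hlt⟩ := h
    exact ⟨v, hv, by exact_mod_cast hlt⟩
  choose ζ hζmem hζlt using hζex
  obtain ⟨zlim, hzlims, φ₂, hφ₂mono, hζtend⟩ :=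
    (isCompact_sphere (0:H) 1).tendsto_subseq (fun k => (hζmem k).2)
  set ψ : ℕ → ℕ := φ ∘ φ₂ with hψ
  have hψmono : StrictMono ψ := hφmono.comp hφ₂mono
  have hψtop : Tendsto ψ atTop atTop := hψmono.tendsto_atTop
  have hxψ : Tendsto (fun n => x (ψ n)) atTop (𝓝 xbar) := hxlim.comp hψtop
  have hξψ : Tendsto (fun n => ξ (ψ n)) atTop (𝓝 ξbar) := hξlim.comp hψtop
  have hζ' : Tendsto (fun n => ζ (φ₂ n)) atTop (𝓝 zlim) := hζtend
  have hζnorm : ∀ n, ‖ζ (φ₂ n)‖ = 1 := fun n =>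
    mem_sphere_zero_iff_norm.mp (hζmem (φ₂ n)).2
  -- Hausdorff distance tends to 0
  have hdH : Tendsto (fun n => EMetric.hausdorffEdist (C (t (ψ n))) (C tbar)) atTop (𝓝 0) := by
    rw [ENNReal.tendsto_nhds_zero]
    intro ε hε
    have hε1 : (0:ℝ≥0∞) < min ε 1 := lt_min hε zero_lt_one
    have hne : min ε 1 ≠ ⊤ := ne_top_of_le_ne_top ENNReal.one_ne_top (min_le_right _ _)
    have hpos : 0 < (min ε 1).toReal := ENNReal.toReal_pos hε1.ne' hne
    obtain ⟨δ, hδpos, hδ⟩ := hH2 _ hpos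
    have : ∀ᶠ n in atTop, |t (ψ n) - tbar| < δ := by
      have := (htlim.comp hψtop)
      have h2 := Metric.tendsto_atTop.mp this δ hδpos
      obtain ⟨N, hN⟩ := h2
      exact eventually_atTop.mpr ⟨N, fun n hn => by
        simpa [Real.dist_eq] using hN n hn⟩
    filter_upwards [this] with n hn
    have := hδ _ (ht (ψ n)) _ htbar hn
    rw [ENNReal.ofReal_toReal hne] at this
    exact le_trans this.le (min_le_left _ _)
  -- zlim is a proximal normal at xbar
  have hzlimcone : zlim ∈ proxNormalCone (C tbar) xbar := by
    refine ⟨1 / (2 * ρ), by positivity, ?_⟩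
    intro y hy
    -- approximating sequence
    have hsel : ∀ n : ℕ, ∃ z ∈ C (t (ψ n)),
        edist y z < EMetric.infEdist y (C (t (ψ n))) + ((n:ℝ≥0∞) + 1)⁻¹ := by
      intro n
      refine EMetric.infEdist_lt_iff.mp ?_
      refine ENNReal.lt_add_right (Metric.infEdist_ne_top (hH1 _ (ht (ψ n))).1) ?_
      simp [ENNReal.inv_ne_zero]
    choose z hzmem hzd using hsel
    have hzbound : ∀ n, edist y (z n) ≤
        EMetric.hausdorffEdist (C (t (ψ n))) (C tbar) + ((n:ℝ≥0∞) + 1)⁻¹ := by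
      intro n
      refine (hzd n).le.trans (add_le_add_left ?_ _)
      rw [show EMetric.hausdorffEdist (C (t (ψ n))) (C tbar) = EMetric.hausdorffEdist (C tbar) (C (t (ψ n))) from EMetric.hausdorffEdist_comm]
      exact EMetric.infEdist_le_hausdorffEdist_of_mem hy
    have hinv : Tendsto (fun n : ℕ => ((n:ℝ≥0∞) + 1)⁻¹) atTop (𝓝 0) := by
      have h := ENNReal.tendsto_inv_nat_nhds_zero.comp (tendsto_add_atTop_nat 1)
      simp only [Function.comp_def] at h
      refine h.congr fun n => ?_
      norm_cast
    have hsum : Tendsto (fun n => EMetric.hausdorffEdist (C (t (ψ n))) (C tbar)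
        + ((n:ℝ≥0∞) + 1)⁻¹) atTop (𝓝 0) := by
      simpa using hdH.add hinv
    have hedist : Tendsto (fun n => edist y (z n)) atTop (𝓝 0) :=
      tendsto_of_tendsto_of_tendsto_of_le_of_le tendsto_const_nhds hsum
        (fun n => zero_le) hzbound
    have hz : Tendsto z atTop (𝓝 y) := by
      rw [tendsto_iff_edist_tendsto_0]
      simpa [edist_comm] using hedist
    -- prox-regularity inequality along the subsequence
    have hkey : ∀ n, (inner ℝ (ζ (φ₂ n)) (z n - x (ψ n)) : ℝ) ≤
        1 / (2 * ρ) * ‖z n - x (ψ n)‖ ^ 2 := by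
      intro n
      have := (hH1 _ (ht (ψ n))).2.2 _ (hx (ψ n)) _ (hζmem (φ₂ n)).1 _ (hzmem n)
      rwa [hζnorm n] at this
    have hL : Tendsto (fun n => (inner ℝ (ζ (φ₂ n)) (z n - x (ψ n)) : ℝ)) atTop
        (𝓝 (inner ℝ zlim (y - xbar) : ℝ)) :=
      hζ'.inner (hz.sub hxψ)
    have hR : Tendsto (fun n => 1 / (2 * ρ) * ‖z n - x (ψ n)‖ ^ 2) atTop
        (𝓝 (1 / (2 * ρ) * ‖y - xbar‖ ^ 2)) :=
      (((hz.sub hxψ).norm.pow 2).const_mul _)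
    exact le_of_tendsto_of_tendsto' hL hR hkey
  -- final contradiction
  have hrle : r ≤ (inner ℝ ξbar zlim : ℝ) := by
    have : Tendsto (fun n => (inner ℝ (ξ (ψ n)) (ζ (φ₂ n)) : ℝ)) atTop
        (𝓝 (inner ℝ ξbar zlim : ℝ)) := hξψ.inner hζ'
    exact ge_of_tendsto' this (fun n => (hζlt (φ₂ n)).le) |>.trans_eq rfl
  have hmemA : zlim ∈ proxNormalCone (C tbar) xbar ∩ sphere (0:H) 1 := ⟨hzlimcone, hzlims⟩
  have hle : ((inner ℝ ξbar zlim : ℝ) : EReal) ≤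
      suppFn ξbar (proxNormalCone (C tbar) xbar ∩ sphere (0:H) 1) :=
    by unfold suppFn; exact le_biSup (fun v => ((inner ℝ ξbar v : ℝ) : EReal)) hmemA
  have : (r : EReal) ≤ suppFn ξbar (proxNormalCone (C tbar) xbar ∩ sphere (0:H) 1) :=
    le_trans (by exact_mod_cast hrle) hle
  exact absurd (lt_of_le_of_lt this hr1) (lt_irrefl _)
end

section
/- Let H be a finite-dimensional real Hilbert space and C : [0,T] ⇉ H a set-valued map satisfying conditions (H1), (H2) and (H3). Assume there exists γ > 0 such that for every t ∈ [0,T] and every x ∈ bd C(t) there is a unit vector ℓ satisfying ⟨ℓ, n⟩ ≤ −γ for every unit vector n ∈ N^P(C(t); x). Then C satisfies condition (H5). -/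
open Set Metric
open scoped ENNReal

/-- Condition (H5) with constants `δ, L`. -/
def CondH5 {H : Type*} [NormedAddCommGroup H] [InnerProductSpace ℝ H]
    (T : ℝ) (C : ℝ → Set H) (δ L : ℝ) : Prop :=
  ∀ t ∈ Icc (0:ℝ) T, ∀ x ∈ frontier (C t), ∃ ℓ : H, ‖ℓ‖ = 1 ∧
    ∀ y ∈ C t, ‖y - x‖ < δ → ∀ n ∈ proxNormalCone (C t) y, ‖n‖ = 1 →
      (inner ℝ ℓ n : ℝ) ≤ -(1 / L)

open Filter Topology

/-- External ball condition: a unit proximal normal satisfying the `ρ`-hypomonotonicity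
inequality produces an external ball of radius `ρ`. -/
lemma extBall {H : Type*} [NormedAddCommGroup H] [InnerProductSpace ℝ H] {ρ : ℝ} (hρ : 0 < ρ)
    {S : Set H} {y n : H} (hn : ‖n‖ = 1)
    (hineq : ∀ z ∈ S, (inner ℝ n (z - y) : ℝ) ≤ 1 / (2 * ρ) * ‖z - y‖ ^ 2) :
    ∀ z ∈ S, ρ ≤ ‖z - (y + ρ • n)‖ := by
  intro z hz
  have h := hineq z hz
  have hexp : ‖z - (y + ρ • n)‖ ^ 2
      = ‖z - y‖ ^ 2 - 2 * (ρ * (inner ℝ n (z - y) : ℝ)) + ρ ^ 2 := by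
    have e1 : z - (y + ρ • n) = (z - y) - ρ • n := by abel
    rw [e1, norm_sub_sq_real, real_inner_smul_right, norm_smul, Real.norm_eq_abs,
      abs_of_pos hρ, hn, real_inner_comm]
    ring
  have h2 : ρ * (inner ℝ n (z - y) : ℝ) ≤ ‖z - y‖ ^ 2 / 2 := by
    have h3 := mul_le_mul_of_nonneg_left h (le_of_lt hρ)
    calc ρ * (inner ℝ n (z - y) : ℝ) ≤ ρ * (1 / (2 * ρ) * ‖z - y‖ ^ 2) := h3
      _ = ‖z - y‖ ^ 2 / 2 := by field_simp
  have hsq : ρ ^ 2 ≤ ‖z - (y + ρ • n)‖ ^ 2 := by nlinarith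
  nlinarith [norm_nonneg (z - (y + ρ • n))]

/-- If `p ∈ S` and some ball of radius `r` around `q` misses `S`, the segment from `p`
to `q` meets the frontier of `S` at distance at most `‖q - p‖ - r` from `p`. -/
lemma frontier_on_segment {H : Type*} [NormedAddCommGroup H] [NormedSpace ℝ H] {S : Set H}
    (hS : IsClosed S) {p q : H} (hp : p ∈ S) {r : ℝ} (hr : 0 < r)
    (hq : ∀ z ∈ S, r ≤ ‖z - q‖) :
    ∃ w ∈ frontier S, ‖w - p‖ ≤ ‖q - p‖ - r := by
  set f : ℝ → H := fun s => p + s • (q - p) with hf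
  have hfc : Continuous f := by
    rw [hf]; fun_prop
  set A : Set ℝ := Icc (0:ℝ) 1 ∩ f ⁻¹' S with hA
  have hf0 : f 0 = p := by simp [hf]
  have h0A : (0:ℝ) ∈ A := by
    constructor
    · exact ⟨le_refl 0, zero_le_one⟩
    · simpa [hf0] using hp
  have hAne : A.Nonempty := ⟨0, h0A⟩
  have hAclosed : IsClosed A := (isClosed_Icc).inter (hS.preimage hfc)
  have hAcompact : IsCompact A := isCompact_Icc.of_isClosed_subset hAclosed inter_subset_left
  have hrqp : r ≤ ‖q - p‖ := by
    have := hq p hp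
    rwa [← norm_neg, neg_sub] at this
  have hqp : 0 < ‖q - p‖ := lt_of_lt_of_le hr hrqp
  have hbound : ∀ s ∈ A, s ≤ 1 - r / ‖q - p‖ := by
    intro s hs
    obtain ⟨⟨hs0, hs1⟩, hsS⟩ := hs
    have h1 : f s - q = (s - 1) • (q - p) := by
      simp only [hf]
      rw [sub_smul, one_smul]
      abel
    have h2 : r ≤ (1 - s) * ‖q - p‖ := by
      have := hq (f s) hsS
      rwa [h1, norm_smul, Real.norm_eq_abs, abs_of_nonpos (by linarith), neg_sub] at this
    rw [le_sub_iff_add_le, ← le_sub_iff_add_le', div_le_iff₀ hqp]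
    nlinarith
  set s₀ : ℝ := sSup A with hs₀
  have hs₀A : s₀ ∈ A := hAcompact.sSup_mem hAne
  have hs₀0 : 0 ≤ s₀ := le_csSup hAcompact.bddAbove h0A
  have hs₀le : s₀ ≤ 1 - r / ‖q - p‖ := csSup_le hAne hbound
  have hs₀1 : s₀ < 1 := by
    have : 0 < r / ‖q - p‖ := div_pos hr hqp
    linarith
  refine ⟨f s₀, ?_, ?_⟩
  · rw [frontier]
    refine ⟨subset_closure hs₀A.2, ?_⟩
    intro hint
    rw [mem_interior_iff_mem_nhds, Metric.mem_nhds_iff] at hint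
    obtain ⟨ε, hε, hball⟩ := hint
    set s₁ : ℝ := min (s₀ + ε / (2 * ‖q - p‖)) 1 with hs₁
    have hs₁gt : s₀ < s₁ := by
      apply lt_min
      · have : 0 < ε / (2 * ‖q - p‖) := div_pos hε (by positivity)
        linarith
      · exact hs₀1
    have hs₁le : s₁ ≤ 1 := min_le_right _ _
    have hs₁A : s₁ ∈ A := by
      refine ⟨⟨le_trans hs₀0 (le_of_lt hs₁gt), hs₁le⟩, ?_⟩
      apply hball
      have h5 : f s₁ - f s₀ = (s₁ - s₀) • (q - p) := by
        simp only [hf]; rw [sub_smul]; abel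
      rw [Metric.mem_ball, dist_eq_norm, h5, norm_smul, Real.norm_eq_abs,
        abs_of_pos (by linarith)]
      have h6 : s₁ - s₀ ≤ ε / (2 * ‖q - p‖) := by
        have := min_le_left (s₀ + ε / (2 * ‖q - p‖)) 1
        simp only [hs₁] at *
        linarith [this]
      calc (s₁ - s₀) * ‖q - p‖ ≤ ε / (2 * ‖q - p‖) * ‖q - p‖ :=
            mul_le_mul_of_nonneg_right h6 (le_of_lt hqp)
        _ = ε / 2 := by field_simp
        _ < ε := by linarith
    have := le_csSup hAcompact.bddAbove hs₁A
    linarith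
  · have h7 : f s₀ - p = s₀ • (q - p) := by simp [hf]
    rw [h7, norm_smul, Real.norm_eq_abs, abs_of_nonneg hs₀0]
    have := mul_le_mul_of_nonneg_right hs₀le (le_of_lt hqp)
    calc s₀ * ‖q - p‖ ≤ (1 - r / ‖q - p‖) * ‖q - p‖ := this
      _ = ‖q - p‖ - r := by field_simp

/-- From a small Hausdorff distance, pick a nearby point in the other set. -/
lemma haus_pick {H : Type*} [NormedAddCommGroup H] {A B : Set H} {ε : ℝ} (hε : 0 < ε)
    (h : EMetric.hausdorffEdist A B < ENNReal.ofReal ε) {a : H} (ha : a ∈ A) :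
    ∃ b ∈ B, ‖a - b‖ < ε := by
  have h1 : EMetric.infEdist a B < ENNReal.ofReal ε :=
    lt_of_le_of_lt (EMetric.infEdist_le_hausdorffEdist_of_mem ha) h
  rw [EMetric.infEdist, infEDist_lt_iff] at h1
  obtain ⟨b, hb, hd⟩ := h1
  exact ⟨b, hb, by rwa [edist_lt_ofReal, dist_eq_norm] at hd⟩

/-- A sequence eventually in a compact set has a limit along an ultrafilter. -/
lemma ultra_lim {X : Type*} [TopologicalSpace X] (U : Ultrafilter ℕ) {s : Set X}
    (hs : IsCompact s) {u : ℕ → X} (hu : ∀ᶠ k in (U : Filter ℕ), u k ∈ s) :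
    ∃ a ∈ s, Tendsto u (U : Filter ℕ) (𝓝 a) := by
  obtain ⟨a, has, hle⟩ := hs.ultrafilter_le_nhds (U.map u) (by
    rw [Ultrafilter.coe_map, le_principal_iff, mem_map]
    exact hu)
  exact ⟨a, has, by rwa [Ultrafilter.coe_map] at hle⟩

theorem stmt10 {H : Type*} [NormedAddCommGroup H] [InnerProductSpace ℝ H]
    [FiniteDimensional ℝ H]
    (T : ℝ) (hT : 0 < T) (C : ℝ → Set H)
    (ρ : ℝ) (hρ : 0 < ρ)
    (hH1 : ∀ t ∈ Icc (0:ℝ) T, (C t).Nonempty ∧ IsClosed (C t) ∧ UniformProxRegular ρ (C t))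
    (hH2 : HausdorffCts T C)
    (hH3 : ∀ t ∈ Icc (0:ℝ) T, IsCompact (frontier (C t)))
    (γ : ℝ) (hγ : 0 < γ)
    (hsup : ∀ t ∈ Icc (0:ℝ) T, ∀ x ∈ frontier (C t), ∃ ℓ : H, ‖ℓ‖ = 1 ∧
      ∀ n ∈ proxNormalCone (C t) x, ‖n‖ = 1 → (inner ℝ ℓ n : ℝ) ≤ -γ) :
    ∃ δ > 0, ∃ L > 0, CondH5 T C δ L := by
  rcases subsingleton_or_nontrivial H with hsub | hnt
  · -- trivial space : all frontiers are empty
    refine ⟨1, one_pos, 1, one_pos, ?_⟩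
    intro t ht x hx
    exfalso
    rcases (C t).eq_empty_or_nonempty with he | hne
    · rw [he] at hx; simp at hx
    · have : C t = univ := eq_univ_of_forall fun v => by
        obtain ⟨w, hw⟩ := hne
        rwa [Subsingleton.elim v w]
      rw [this, frontier_univ] at hx
      exact hx
  by_contra hcon
  push_neg at hcon
  -- negated (H5) with L = 2/γ, δ = 1/(k+1)
  have hfail : ∀ k : ℕ, ∃ t ∈ Icc (0:ℝ) T, ∃ x ∈ frontier (C t),
      ∀ ℓ : H, ‖ℓ‖ = 1 → ∃ y ∈ C t, ‖y - x‖ < 1/(k+1) ∧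
        ∃ n ∈ proxNormalCone (C t) y, ‖n‖ = 1 ∧ -(γ/2) < (inner ℝ ℓ n : ℝ) := by
    intro k
    have hk : (0:ℝ) < 1/(k+1) := by positivity
    have hL : (0:ℝ) < 2/γ := by positivity
    have h := hcon (1/(k+1)) hk (2/γ) hL
    rw [CondH5] at h
    push_neg at h
    obtain ⟨t, ht, x, hx, hb⟩ := h
    refine ⟨t, ht, x, hx, ?_⟩
    intro ℓ hℓ
    obtain ⟨y, hy, hyx, n, hn, hn1, hlt⟩ := hb ℓ hℓ
    refine ⟨y, hy, hyx, n, hn, hn1, ?_⟩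
    have he : (1:ℝ)/(2/γ) = γ/2 := one_div_div 2 γ
    rw [he] at hlt
    exact hlt
  choose t ht x hx hbad using hfail
  -- a unit vector
  obtain ⟨v, hv⟩ := exists_ne (0 : H)
  set e : H := ‖v‖⁻¹ • v with he
  have he1 : ‖e‖ = 1 := norm_smul_inv_norm hv
  -- first batch
  have h1 := fun k => hbad k e he1
  choose y hyC hyx n hnC hn1 hdum using h1
  -- ultrafilter setup
  set U : Ultrafilter ℕ := Ultrafilter.of atTop with hU
  have hUle : (U : Filter ℕ) ≤ atTop := Ultrafilter.of_le _
  have hone : Tendsto (fun k : ℕ => 1/((k:ℝ)+1)) (U : Filter ℕ) (𝓝 0) :=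
    tendsto_one_div_add_atTop_nhds_zero_nat.mono_left hUle
  -- limit of t
  obtain ⟨t₀, ht₀, httend⟩ := ultra_lim U isCompact_Icc
    (Eventually.of_forall (fun k => ht k) : ∀ᶠ k in (U : Filter ℕ), t k ∈ Icc (0:ℝ) T)
  -- Hausdorff closeness
  have hclose : ∀ ε > 0, ∀ᶠ k in (U : Filter ℕ),
      EMetric.hausdorffEdist (C (t k)) (C t₀) < ENNReal.ofReal ε := by
    intro ε hε
    obtain ⟨δ, hδ, hd⟩ := hH2 ε hε
    have hev : ∀ᶠ k in (U : Filter ℕ), |t k - t₀| < δ := by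
      have h0 : ∀ᶠ s in 𝓝 t₀, |s - t₀| < δ := by
        have := Metric.ball_mem_nhds t₀ hδ
        filter_upwards [this] with s hs
        rwa [Metric.mem_ball, Real.dist_eq] at hs
      exact httend.eventually h0
    filter_upwards [hev] with k hk
    exact hd (t k) (ht k) t₀ ht₀ hk
  -- prox-regularity inequality
  have hprox : ∀ (k : ℕ) (yy nn : H), yy ∈ C (t k) → nn ∈ proxNormalCone (C (t k)) yy →
      ‖nn‖ = 1 → ∀ z ∈ C (t k), (inner ℝ nn (z - yy) : ℝ) ≤ 1/(2*ρ) * ‖z - yy‖^2 := by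
    intro k yy nn hyy hnn hnn1 z hz
    have h := (hH1 (t k) (ht k)).2.2 yy hyy nn hnn z hz
    rwa [hnn1] at h
  -- y k is eventually 3ε-close to frontier (C t₀)
  have hnear : ∀ ε : ℝ, 0 < ε → ε < ρ → ∀ᶠ k in (U : Filter ℕ),
      ∃ w ∈ frontier (C t₀), ‖y k - w‖ ≤ 3*ε := by
    intro ε hε hερ
    filter_upwards [hclose ε hε] with k hk
    have hsymm : EMetric.hausdorffEdist (C t₀) (C (t k)) < ENNReal.ofReal ε := by
      rw [EMetric.hausdorffEdist, hausdorffEDist_comm]; exact hk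
    obtain ⟨p, hpC, hpd⟩ := haus_pick hε hk (hyC k)
    set q : H := y k + ρ • n k with hq
    have hqfar : ∀ z ∈ C t₀, ρ - ε ≤ ‖z - q‖ := by
      intro z hz
      obtain ⟨w, hwC, hwd⟩ := haus_pick hε hsymm hz
      have h1 : ρ ≤ ‖w - q‖ :=
        extBall hρ (hn1 k) (hprox k (y k) (n k) (hyC k) (hnC k) (hn1 k)) w hwC
      have h2 : ‖w - q‖ ≤ ‖w - z‖ + ‖z - q‖ := norm_sub_le_norm_sub_add_norm_sub w z q
      have h3 : ‖w - z‖ < ε := by rwa [← norm_neg, neg_sub] at hwd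
      linarith
    obtain ⟨w, hwF, hwd⟩ :=
      frontier_on_segment (hH1 t₀ ht₀).2.1 hpC (by linarith : (0:ℝ) < ρ - ε) hqfar
    have hqyk : ‖q - y k‖ = ρ := by
      rw [hq]
      simp [norm_smul, abs_of_pos hρ, hn1 k]
    have hqp : ‖q - p‖ ≤ ρ + ε := by
      have h4 : ‖q - p‖ ≤ ‖q - y k‖ + ‖y k - p‖ := norm_sub_le_norm_sub_add_norm_sub q (y k) p
      rw [hqyk] at h4
      linarith
    refine ⟨w, hwF, ?_⟩
    have h5 : ‖y k - w‖ ≤ ‖y k - p‖ + ‖p - w‖ := norm_sub_le_norm_sub_add_norm_sub (y k) p w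
    have h6 : ‖p - w‖ = ‖w - p‖ := by rw [← norm_neg, neg_sub]
    linarith
  -- frontier data
  set F : Set H := frontier (C t₀) with hF
  have hFcomp : IsCompact F := hH3 t₀ ht₀
  have hFclosed : IsClosed F := isClosed_frontier
  have hFne : F.Nonempty := by
    have := (hnear (ρ/2) (by positivity) (by linarith)).exists
    obtain ⟨k, w, hwF, _⟩ := this
    exact ⟨w, hwF⟩
  obtain ⟨M, hM⟩ := hFcomp.isBounded.subset_closedBall 0
  -- y k is eventually in a fixed compact ball
  have hyball : ∀ᶠ k in (U : Filter ℕ), y k ∈ closedBall (0:H) (M + 3*(ρ/2)) := by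
    filter_upwards [hnear (ρ/2) (by positivity) (by linarith)] with k hk
    obtain ⟨w, hwF, hwd⟩ := hk
    have h1 : ‖w‖ ≤ M := by
      have := hM hwF
      rwa [mem_closedBall, dist_zero_right] at this
    rw [mem_closedBall, dist_zero_right]
    calc ‖y k‖ = ‖(y k - w) + w‖ := by rw [sub_add_cancel]
      _ ≤ ‖y k - w‖ + ‖w‖ := norm_add_le _ _
      _ ≤ M + 3*(ρ/2) := by linarith
  obtain ⟨x₀, _, hytend⟩ := ultra_lim U (isCompact_closedBall (0:H) (M + 3*(ρ/2))) hyball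
  -- x k also tends to x₀
  have hyx0 : Tendsto (fun k => y k - x k) (U : Filter ℕ) (𝓝 0) :=
    squeeze_zero_norm (fun k => (hyx k).le) hone
  have hxtend : Tendsto x (U : Filter ℕ) (𝓝 x₀) := by
    have h0 : Tendsto (fun k => y k - (y k - x k)) (U : Filter ℕ) (𝓝 (x₀ - 0)) :=
      hytend.sub hyx0
    simpa using h0
  -- x₀ is a frontier point of C t₀
  have hx₀F : x₀ ∈ F := by
    have hinf : ∀ ε : ℝ, 0 < ε → ε < ρ → Metric.infDist x₀ F ≤ 3*ε := by
      intro ε hε hερ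
      have hev : ∀ᶠ k in (U : Filter ℕ), Metric.infDist (y k) F ≤ 3*ε := by
        filter_upwards [hnear ε hε hερ] with k hk
        obtain ⟨w, hwF, hwd⟩ := hk
        exact le_trans (Metric.infDist_le_dist_of_mem hwF) (by rwa [dist_eq_norm])
      have hcont : Tendsto (fun k => Metric.infDist (y k) F) (U : Filter ℕ)
          (𝓝 (Metric.infDist x₀ F)) := ((continuous_infDist_pt F).tendsto x₀).comp hytend
      exact le_of_tendsto hcont hev
    have hzero : Metric.infDist x₀ F = 0 := by
      by_contra hne0
      have hpos : 0 < Metric.infDist x₀ F :=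
        lt_of_le_of_ne Metric.infDist_nonneg (Ne.symm hne0)
      have h1 := hinf (min (ρ/2) (Metric.infDist x₀ F / 6)) (by positivity)
        (lt_of_le_of_lt (min_le_left _ _) (by linarith))
      have h2 : min (ρ/2) (Metric.infDist x₀ F / 6) ≤ Metric.infDist x₀ F / 6 :=
        min_le_right _ _
      linarith
    exact (hFclosed.mem_iff_infDist_zero hFne).2 hzero
  -- the direction at the limit point
  obtain ⟨ℓ, hℓ1, hℓprop⟩ := hsup t₀ ht₀ x₀ hx₀F
  -- second batch using ℓ
  have h2 := fun k => hbad k ℓ hℓ1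
  choose y' hy'C hy'x n' hn'C hn'1 hn'ℓ using h2
  have hy'tend : Tendsto y' (U : Filter ℕ) (𝓝 x₀) := by
    have h0 : Tendsto (fun k => x k + (y' k - x k)) (U : Filter ℕ) (𝓝 (x₀ + 0)) :=
      hxtend.add (squeeze_zero_norm (fun k => (hy'x k).le) hone)
    simpa using h0
  -- limit of the normals
  obtain ⟨n₀, hn₀s, hntend⟩ := ultra_lim U (isCompact_sphere (0:H) 1)
    (Eventually.of_forall fun k => by
      rw [mem_sphere_zero_iff_norm]; exact hn'1 k)
  have hn₀1 : ‖n₀‖ = 1 := mem_sphere_zero_iff_norm.1 hn₀s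
  -- n₀ is a proximal normal at x₀
  have hcone : n₀ ∈ proxNormalCone (C t₀) x₀ := by
    refine ⟨1/(2*ρ), by positivity, ?_⟩
    intro z hz
    have key : ∀ ε : ℝ, 0 < ε →
        (inner ℝ n₀ (z - x₀) : ℝ) ≤ 1/(2*ρ) * (‖z - x₀‖ + ε)^2 + ε := by
      intro ε hε
      have hev : ∀ᶠ k in (U : Filter ℕ),
          (inner ℝ (n' k) (z - y' k) : ℝ) ≤ 1/(2*ρ) * (‖z - y' k‖ + ε)^2 + ε := by
        filter_upwards [hclose ε hε] with k hk
        have hsymm : EMetric.hausdorffEdist (C t₀) (C (t k)) < ENNReal.ofReal ε := by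
          rw [EMetric.hausdorffEdist, hausdorffEDist_comm]; exact hk
        obtain ⟨z', hz'C, hz'd⟩ := haus_pick hε hsymm hz
        have h1 := hprox k (y' k) (n' k) (hy'C k) (hn'C k) (hn'1 k) z' hz'C
        have h2 : (inner ℝ (n' k) (z - z') : ℝ) ≤ ε := by
          calc (inner ℝ (n' k) (z - z') : ℝ) ≤ ‖n' k‖ * ‖z - z'‖ := real_inner_le_norm _ _
            _ = ‖z - z'‖ := by rw [hn'1 k, one_mul]
            _ ≤ ε := hz'd.le
        have h3 : (inner ℝ (n' k) (z - y' k) : ℝ)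
            = (inner ℝ (n' k) (z' - y' k) : ℝ) + (inner ℝ (n' k) (z - z') : ℝ) := by
          rw [← inner_add_right]
          congr 1
          abel
        have h4 : ‖z' - y' k‖ ≤ ‖z - y' k‖ + ε := by
          have h5 : ‖z' - y' k‖ ≤ ‖z' - z‖ + ‖z - y' k‖ :=
            norm_sub_le_norm_sub_add_norm_sub z' z (y' k)
          have h6 : ‖z' - z‖ < ε := by rwa [← norm_neg, neg_sub] at hz'd
          linarith
        have h7 : 1/(2*ρ) * ‖z' - y' k‖^2 ≤ 1/(2*ρ) * (‖z - y' k‖ + ε)^2 := by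
          apply mul_le_mul_of_nonneg_left _ (by positivity)
          exact pow_le_pow_left₀ (norm_nonneg _) h4 2
        linarith
      have hL : Tendsto (fun k => (inner ℝ (n' k) (z - y' k) : ℝ)) (U : Filter ℕ)
          (𝓝 (inner ℝ n₀ (z - x₀) : ℝ)) :=
        hntend.inner (tendsto_const_nhds.sub hy'tend)
      have hR : Tendsto (fun k => 1/(2*ρ) * (‖z - y' k‖ + ε)^2 + ε) (U : Filter ℕ)
          (𝓝 (1/(2*ρ) * (‖z - x₀‖ + ε)^2 + ε)) := by
        have hnorm : Tendsto (fun k => ‖z - y' k‖) (U : Filter ℕ) (𝓝 ‖z - x₀‖) :=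
          (tendsto_const_nhds.sub hy'tend).norm
        exact (((hnorm.add tendsto_const_nhds).pow 2).const_mul _).add tendsto_const_nhds
      exact le_of_tendsto_of_tendsto hL hR hev
    have htt : Tendsto (fun ε : ℝ => 1/(2*ρ) * (‖z - x₀‖ + ε)^2 + ε) (𝓝[>] 0)
        (𝓝 (1/(2*ρ) * ‖z - x₀‖^2)) := by
      have hc : Tendsto (fun ε : ℝ => 1/(2*ρ) * (‖z - x₀‖ + ε)^2 + ε) (𝓝 0)
          (𝓝 (1/(2*ρ) * (‖z - x₀‖ + 0)^2 + 0)) := by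
        apply Tendsto.add _ tendsto_id
        exact (((tendsto_const_nhds.add tendsto_id).pow 2).const_mul _)
      have h8 : Tendsto (fun ε : ℝ => 1/(2*ρ) * (‖z - x₀‖ + ε)^2 + ε) (𝓝[>] 0)
          (𝓝 (1/(2*ρ) * (‖z - x₀‖ + 0)^2 + 0)) := hc.mono_left nhdsWithin_le_nhds
      simpa using h8
    refine ge_of_tendsto htt ?_
    filter_upwards [self_mem_nhdsWithin] with ε hε
    exact key ε hε
  -- contradiction
  have hfin1 : (inner ℝ ℓ n₀ : ℝ) ≤ -γ := hℓprop n₀ hcone hn₀1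
  have hfin2 : -(γ/2) ≤ (inner ℝ ℓ n₀ : ℝ) := by
    have hL : Tendsto (fun k => (inner ℝ ℓ (n' k) : ℝ)) (U : Filter ℕ)
        (𝓝 (inner ℝ ℓ n₀ : ℝ)) := tendsto_const_nhds.inner hntend
    exact ge_of_tendsto hL (Eventually.of_forall fun k => (hn'ℓ k).le)
  linarith
end

section
/- Let H be a finite-dimensional real Hilbert space and C : [0,T] ⇉ H a set-valued map satisfying conditions (H1), (H2), (H3) and (H4). Then C satisfies condition (H5). -/
open Set Metric
open scoped ENNReal

/-- Condition (H4) with constants `r, L`. -/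
def CondH4 {H : Type*} [NormedAddCommGroup H] [InnerProductSpace ℝ H]
    (T : ℝ) (C : ℝ → Set H) (r L : ℝ) : Prop :=
  ∀ t ∈ Icc (0:ℝ) T, ∀ x ∈ frontier (C t), ∃ z : H,
    convexHull ℝ ({x} ∪ ball z (2 * r)) ⊆ C t ∧ ‖z - x‖ ≤ L * r

private lemma stmt11_arith (ρ r L M θ δ K : ℝ) (hρ : 0 < ρ) (hr : 0 < r)
    (hM : M = (L + 1) * r) (hL : 0 < L)
    (hθ0 : 0 < θ) (hθ1 : θ ≤ 1) (hθ2 : θ ≤ ρ * r / (4 * M ^ 2))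
    (hδ0 : 0 < δ) (hδ1 : δ ≤ θ * r / 8) (hδ2 : δ ≤ ρ * r / (8 * M)) (hδ3 : δ ≤ θ * ρ / 2)
    (hmain : θ * K + θ * r ≤ (δ + θ * M) ^ 2 / (2 * ρ) + δ) : K ≤ -(r / 2) := by
  have hM0 : 0 < M := by rw [hM]; positivity
  have e0 : δ * δ ≤ θ * θ * (ρ * r) / 16 := by
    nlinarith [mul_le_mul hδ3 hδ1 hδ0.le (by positivity : (0:ℝ) ≤ θ * ρ / 2)]
  have e1 : δ ^ 2 ≤ ρ * θ * r / 16 := by nlinarith [hθ1, hθ0.le, hρ.le, hr.le, e0]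
  have e2' : δ * (8 * M) ≤ ρ * r := (le_div_iff₀ (by positivity)).mp hδ2
  have e2 : 2 * δ * (θ * M) ≤ ρ * θ * r / 4 := by
    nlinarith [mul_le_mul_of_nonneg_left e2' hθ0.le]
  have e3' : θ * (4 * M ^ 2) ≤ ρ * r := (le_div_iff₀ (by positivity)).mp hθ2
  have e3 : (θ * M) ^ 2 ≤ ρ * θ * r / 4 := by
    nlinarith [mul_le_mul_of_nonneg_left e3' hθ0.le]
  have e5 : (δ + θ * M) ^ 2 ≤ (9 / 16) * (ρ * θ * r) := by nlinarith [e1, e2, e3]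
  have e6 : (δ + θ * M) ^ 2 / (2 * ρ) ≤ 9 * (θ * r) / 32 := by
    rw [div_le_iff₀ (by positivity)]
    nlinarith [e5]
  have hstep : θ * K ≤ θ * (-(r / 2)) := by nlinarith [hmain, e6, hδ1]
  exact le_of_mul_le_mul_left hstep hθ0

private lemma stmt11_final (r L d K : ℝ) (hr : 0 < r) (hL : 0 < L)
    (hd2 : 2 * r ≤ d) (hdL : d ≤ L * r) (hK : K ≤ -(r / 2)) :
    d⁻¹ * K ≤ -(1 / (2 * L)) := by
  have hd0 : 0 < d := lt_of_lt_of_le (by positivity) hd2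
  have h1 : d⁻¹ * K ≤ d⁻¹ * (-(r / 2)) :=
    mul_le_mul_of_nonneg_left hK (inv_nonneg.2 hd0.le)
  have h2 : d⁻¹ * (-(r / 2)) ≤ -(1 / (2 * L)) := by
    rw [inv_mul_eq_div, div_le_iff₀ hd0]
    calc -(1 / (2 * L)) * d ≥ -(1 / (2 * L)) * (L * r) := by
          apply mul_le_mul_of_nonpos_left hdL
          rw [neg_nonpos]
          positivity
      _ = -(r / 2) := by field_simp
  linarith

theorem stmt11 {H : Type*} [NormedAddCommGroup H] [InnerProductSpace ℝ H]
    [FiniteDimensional ℝ H]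
    (T : ℝ) (hT : 0 < T) (C : ℝ → Set H)
    (ρ : ℝ) (hρ : 0 < ρ)
    (hH1 : ∀ t ∈ Icc (0:ℝ) T, (C t).Nonempty ∧ IsClosed (C t) ∧ UniformProxRegular ρ (C t))
    (hH2 : HausdorffCts T C)
    (hH3 : ∀ t ∈ Icc (0:ℝ) T, IsCompact (frontier (C t)))
    (hH4 : ∃ r > 0, ∃ L > 0, CondH4 T C r L) :
    ∃ δ > 0, ∃ L > 0, CondH5 T C δ L := by
  obtain ⟨r, hr, L, hL, h4⟩ := hH4
  set M : ℝ := (L + 1) * r with hMdef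
  have hM0 : 0 < M := by positivity
  set θ : ℝ := min 1 (ρ * r / (4 * M ^ 2)) with hθdef
  have hθ0 : 0 < θ := lt_min one_pos (by positivity)
  have hθ1 : θ ≤ 1 := min_le_left _ _
  have hθ2 : θ ≤ ρ * r / (4 * M ^ 2) := min_le_right _ _
  set δ : ℝ := min (min (θ * r / 8) (ρ * r / (8 * M))) (min (θ * ρ / 2) (r / 2)) with hδdef
  have hδ0 : 0 < δ :=
    lt_min (lt_min (by positivity) (by positivity)) (lt_min (by positivity) (by positivity))
  have hδ1 : δ ≤ θ * r / 8 := le_trans (min_le_left _ _) (min_le_left _ _)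
  have hδ2 : δ ≤ ρ * r / (8 * M) := le_trans (min_le_left _ _) (min_le_right _ _)
  have hδ3 : δ ≤ θ * ρ / 2 := le_trans (min_le_right _ _) (min_le_left _ _)
  clear_value M θ δ
  refine ⟨δ, hδ0, 2 * L, by positivity, ?_⟩
  intro t ht x hx
  obtain ⟨z, hzC, hzx⟩ := h4 t ht x hx
  obtain ⟨hne, hcl, hpr⟩ := hH1 t ht
  have hball : ball z (2 * r) ⊆ C t :=
    (subset_union_right.trans (subset_convexHull ℝ _)).trans hzC
  have hd2 : 2 * r ≤ ‖z - x‖ := by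
    by_contra hlt
    push_neg at hlt
    have hmem : x ∈ ball z (2 * r) := by
      rw [mem_ball, dist_eq_norm, ← norm_neg]
      simpa [neg_sub] using hlt
    exact hx.2 (interior_maximal hball isOpen_ball hmem)
  have hd0 : 0 < ‖z - x‖ := lt_of_lt_of_le (by positivity) hd2
  refine ⟨‖z - x‖⁻¹ • (z - x), ?_, ?_⟩
  · rw [norm_smul, norm_inv, norm_norm, inv_mul_cancel₀ hd0.ne']
  intro y hy hyx n hn hn1
  set K : ℝ := inner ℝ n (z - x) with hKdef
  clear_value K
  have hxy : ‖x - y‖ < δ := by rwa [norm_sub_rev] at hyx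
  have hkey : K ≤ -(r / 2) := by
    set p : H := z + r • n with hpdef
    have hpball : p ∈ ball z (2 * r) := by
      rw [mem_ball, dist_eq_norm]
      have : p - z = r • n := by rw [hpdef]; abel
      rw [this, norm_smul, hn1]
      rw [Real.norm_eq_abs, abs_of_pos hr]
      linarith
    have hmemhull : (1 - θ) • x + θ • p ∈ convexHull ℝ ({x} ∪ ball z (2 * r)) :=
      (convex_convexHull ℝ ({x} ∪ ball z (2 * r)))
        (subset_convexHull ℝ _ (Set.mem_union_left _ (Set.mem_singleton x)))
        (subset_convexHull ℝ _ (Set.mem_union_right _ hpball))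
        (by linarith : (0:ℝ) ≤ 1 - θ) hθ0.le (by ring : (1 - θ) + θ = 1)
    have hx'C : (1 - θ) • x + θ • p ∈ C t := hzC hmemhull
    have hxC : x ∈ C t := hcl.frontier_subset hx
    have hineq := hpr y hy n hn ((1 - θ) • x + θ • p) hx'C
    have hvec : (1 - θ) • x + θ • p - y = (x - y) + (θ • (z - x) + (θ * r) • n) := by
      rw [hpdef]; module
    have hinner : (inner ℝ n ((1 - θ) • x + θ • p - y) : ℝ)
        = inner ℝ n (x - y) + (θ * K + θ * r) := by
      rw [hvec, inner_add_right, inner_add_right, real_inner_smul_right,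
        real_inner_smul_right, real_inner_self_eq_norm_sq, hn1, hKdef]
      ring
    have hnorm : ‖(1 - θ) • x + θ • p - y‖ ≤ δ + θ * M := by
      rw [hvec]
      have h1 : ‖(x - y) + (θ • (z - x) + (θ * r) • n)‖
          ≤ ‖x - y‖ + (‖θ • (z - x)‖ + ‖(θ * r) • n‖) :=
        (norm_add_le _ _).trans (by gcongr; exact norm_add_le _ _)
      have h2 : ‖θ • (z - x)‖ ≤ θ * (L * r) := by
        rw [norm_smul, Real.norm_eq_abs, abs_of_pos hθ0]
        exact mul_le_mul_of_nonneg_left hzx hθ0.le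
      have h3 : ‖(θ * r) • n‖ = θ * r := by
        rw [norm_smul, hn1, Real.norm_eq_abs, abs_of_pos (by positivity)]
        ring
      have h4 : θ * M = θ * (L * r) + θ * r := by rw [hMdef]; ring
      linarith [hxy, h1, h2, h3]
    have hsq : ‖(1 - θ) • x + θ • p - y‖ ^ 2 ≤ (δ + θ * M) ^ 2 :=
      pow_le_pow_left₀ (norm_nonneg _) hnorm 2
    have habs : -δ ≤ (inner ℝ n (x - y) : ℝ) := by
      have := abs_real_inner_le_norm n (x - y)
      rw [hn1, one_mul] at this
      nlinarith [abs_nonneg (inner ℝ n (x - y) : ℝ), neg_abs_le (inner ℝ n (x - y) : ℝ)]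
    have hmain : θ * K + θ * r ≤ (δ + θ * M) ^ 2 / (2 * ρ) + δ := by
      rw [hinner, hn1] at hineq
      have hrhs : ‖(1 - θ) • x + θ • p - y‖ ^ 2 / (2 * ρ) ≤ (δ + θ * M) ^ 2 / (2 * ρ) := by
        gcongr
      have heq : 1 / (2 * ρ) * ‖(1 - θ) • x + θ • p - y‖ ^ 2
          = ‖(1 - θ) • x + θ • p - y‖ ^ 2 / (2 * ρ) := by ring
      linarith
    exact stmt11_arith ρ r L M θ δ K hρ hr hMdef hL hθ0 hθ1 hθ2 hδ0 hδ1 hδ2 hδ3 hmain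
  have hKn : (inner ℝ (‖z - x‖⁻¹ • (z - x)) n : ℝ) = ‖z - x‖⁻¹ * K := by
    rw [real_inner_smul_left, real_inner_comm, hKdef]
  rw [hKn]
  exact stmt11_final r L ‖z - x‖ K hr hL hd2 hzx hkey
end

section
/- In the sublevel-set setting, assume (a), (b) and (c). Then the set-valued map C(t) = ∩_{i=1}^m {x ∈ H : g_i(t,x) ≤ 0} is Hausdorff-continuous on [0,T]. -/
open Set Metric
open scoped Pointwise ENNReal RealInnerProductSpace

lemma sep_lemma {m : ℕ} {H : Type*} [NormedAddCommGroup H] [InnerProductSpace ℝ H]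
    [CompleteSpace H]
    (w : Fin m → H) (S : Set (Fin m)) (hS : S.Nonempty)
    (hPLI : ∀ α : Fin m → ℝ, (∀ i, 0 ≤ α i) → (∀ i, i ∉ S → α i = 0) →
      ∑ i, α i • w i = 0 → ∀ i, α i = 0) :
    ∃ v : H, ‖v‖ = 1 ∧ ∀ i ∈ S, ⟪w i, v⟫ < 0 := by
  classical
  set Δ : Set (Fin m → ℝ) :=
    {α | (∀ i, 0 ≤ α i) ∧ (∀ i, i ∉ S → α i = 0) ∧ ∑ i, α i = 1} with hΔdef
  set f : (Fin m → ℝ) → H := fun α => ∑ i, α i • w i with hfdef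
  set K : Set H := f '' Δ with hKdef
  have hΔclosed : IsClosed Δ := by
    have h1 : IsClosed {α : Fin m → ℝ | ∀ i, 0 ≤ α i} := by
      have : {α : Fin m → ℝ | ∀ i, 0 ≤ α i} = ⋂ i, {α | 0 ≤ α i} := by ext; simp
      rw [this]
      exact isClosed_iInter fun i => isClosed_le continuous_const (continuous_apply i)
    have h2 : IsClosed {α : Fin m → ℝ | ∀ i, i ∉ S → α i = 0} := by
      have : {α : Fin m → ℝ | ∀ i, i ∉ S → α i = 0} = ⋂ i, {α | i ∉ S → α i = 0} := by ext; simp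
      rw [this]
      refine isClosed_iInter fun i => ?_
      by_cases hi : i ∈ S
      · simp [hi]
      · have : {α : Fin m → ℝ | i ∉ S → α i = 0} = {α | α i = 0} := by
          ext α; simp [hi]
        rw [this]
        exact isClosed_eq (continuous_apply i) continuous_const
    have h3 : IsClosed {α : Fin m → ℝ | ∑ i, α i = 1} :=
      isClosed_eq (continuous_finset_sum _ fun i _ => continuous_apply i) continuous_const
    have : Δ = {α : Fin m → ℝ | ∀ i, 0 ≤ α i} ∩
        ({α | ∀ i, i ∉ S → α i = 0} ∩ {α | ∑ i, α i = 1}) := by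
      ext α; simp [hΔdef, and_assoc]
    rw [this]
    exact h1.inter (h2.inter h3)
  have hΔcomp : IsCompact Δ := by
    refine IsCompact.of_isClosed_subset (isCompact_Icc (a := (0 : Fin m → ℝ)) (b := 1))
      hΔclosed ?_
    rintro α ⟨h1, _, h3⟩
    constructor
    · intro i; exact h1 i
    · intro i
      calc α i ≤ ∑ j, α j := Finset.single_le_sum (fun j _ => h1 j) (Finset.mem_univ i)
      _ = 1 := h3
  have hfcont : Continuous f :=
    continuous_finset_sum _ fun i _ => (continuous_apply i).smul continuous_const
  have hKcomp : IsCompact K := hΔcomp.image hfcont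
  have hKconv : Convex ℝ K := by
    rintro x ⟨α, hα, rfl⟩ y ⟨β, hβ, rfl⟩ a b ha hb hab
    refine ⟨a • α + b • β, ⟨?_, ?_, ?_⟩, ?_⟩
    · intro i
      have := hα.1 i; have := hβ.1 i
      simp only [Pi.add_apply, Pi.smul_apply, smul_eq_mul]
      positivity
    · intro i hi
      simp [hα.2.1 i hi, hβ.2.1 i hi]
    · simp only [Pi.add_apply, Pi.smul_apply, smul_eq_mul]
      rw [Finset.sum_add_distrib, ← Finset.mul_sum, ← Finset.mul_sum, hα.2.2, hβ.2.2]
      simpa using hab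
    · simp only [hfdef, Pi.add_apply, Pi.smul_apply, smul_eq_mul, add_smul, mul_smul,
        Finset.sum_add_distrib, Finset.smul_sum]
  have h0K : (0 : H) ∉ K := by
    rintro ⟨α, ⟨hα1, hα2, hα3⟩, hα0⟩
    have hz : ∀ i, α i = 0 := hPLI α hα1 hα2 hα0
    rw [Finset.sum_congr rfl (fun i _ => hz i)] at hα3
    simp at hα3
  obtain ⟨φ, u, hφ0, hφK⟩ :=
    geometric_hahn_banach_point_closed hKconv hKcomp.isClosed h0K
  have hu : 0 < u := by simpa using hφ0
  have hwK : ∀ i ∈ S, w i ∈ K := by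
    intro i hi
    refine ⟨fun j => if j = i then 1 else 0, ⟨?_, ?_, ?_⟩, ?_⟩
    · intro j; positivity
    · intro j hj
      simp only [ite_eq_right_iff]
      rintro rfl; exact absurd hi hj
    · simp
    · simp [hfdef, ite_smul]
  set v₀ : H := (InnerProductSpace.toDual ℝ H).symm φ with hv₀
  have hinner : ∀ y : H, ⟪v₀, y⟫ = φ y := fun y => InnerProductSpace.toDual_symm_apply
  obtain ⟨i₁, hi₁⟩ := hS
  have hv₀ne : v₀ ≠ 0 := by
    intro h
    have h2 := hφK _ (hwK i₁ hi₁)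
    have h1 := hinner (w i₁)
    rw [h, inner_zero_left] at h1
    rw [← h1] at h2
    linarith
  refine ⟨-(‖v₀‖⁻¹ • v₀), ?_, ?_⟩
  · rw [norm_neg, norm_smul, norm_inv, norm_norm, inv_mul_eq_div]
    exact div_self (norm_ne_zero_iff.2 hv₀ne)
  · intro i hi
    have h1 : ⟪w i, v₀⟫ = φ (w i) := by rw [real_inner_comm]; exact hinner (w i)
    have h2 : u < φ (w i) := hφK _ (hwK i hi)
    have h3 : (0:ℝ) < ‖v₀‖⁻¹ := inv_pos.2 (norm_pos_iff.2 hv₀ne)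
    rw [inner_neg_right, real_inner_smul_right, h1]
    nlinarith

lemma mvt_upper {f f' : ℝ → ℝ} {a c : ℝ} (ha : 0 ≤ a)
    (hf : ∀ τ ∈ Icc (0:ℝ) a, HasDerivAt f (f' τ) τ)
    (hc : ∀ τ ∈ Icc (0:ℝ) a, f' τ ≤ c) :
    f a ≤ f 0 + c * a := by
  set F : ℝ → ℝ := fun τ => τ * c - f τ with hF
  have hFd : ∀ τ ∈ Icc (0:ℝ) a, HasDerivAt F (c - f' τ) τ :=
    fun τ hτ => (hasDerivAt_mul_const c).sub (hf τ hτ)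
  have hmono : MonotoneOn F (Icc (0:ℝ) a) := by
    refine monotoneOn_of_deriv_nonneg (convex_Icc _ _)
      (fun τ hτ => (hFd τ hτ).continuousAt.continuousWithinAt) ?_ ?_
    · intro τ hτ
      rw [interior_Icc] at hτ
      exact ((hFd τ (Ioo_subset_Icc_self hτ)).differentiableAt).differentiableWithinAt
    · intro τ hτ
      rw [interior_Icc] at hτ
      rw [(hFd τ (Ioo_subset_Icc_self hτ)).deriv]
      have := hc τ (Ioo_subset_Icc_self hτ)
      linarith
  have := hmono (left_mem_Icc.2 ha) (right_mem_Icc.2 ha) ha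
  simp only [hF, zero_mul] at this
  linarith

/-- The moving set given as a finite intersection of sublevel sets. -/
def Csub {E : Type*} {m : ℕ} (g : Fin m → ℝ → E → ℝ) (t : ℝ) : Set E :=
  {x | ∀ i, g i t x ≤ 0}

/-- The set of `ε`-active indices at `(t, x)`. -/
def Iactive {E : Type*} {m : ℕ} (g : Fin m → ℝ → E → ℝ) (ε t : ℝ) (x : E) :
    Set (Fin m) :=
  {i | -ε ≤ g i t x ∧ g i t x ≤ 0}

theorem stmt13 (d m : ℕ) (T : ℝ) (hT : 0 < T)
    (g : Fin m → ℝ → EuclideanSpace ℝ (Fin d) → ℝ)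
    (hdiff : ∀ i, ∀ t ∈ Icc (0:ℝ) T, ∀ x, DifferentiableAt ℝ (g i t) x)
    -- assumption (a)
    (ε : ℝ) (hε : 0 < ε)
    (hQbdd : Bornology.IsBounded {p : ℝ × EuclideanSpace ℝ (Fin d) |
      p.1 ∈ Icc (0:ℝ) T ∧ p.2 ∈ Csub g p.1 ∧ (Iactive g ε p.1 p.2).Nonempty})
    (hPLI : ∀ t ∈ Icc (0:ℝ) T, ∀ x ∈ Csub g t, (Iactive g ε t x).Nonempty →
      ∀ α : Fin m → ℝ, (∀ i, 0 ≤ α i) → (∀ i, i ∉ Iactive g ε t x → α i = 0) →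
        ∑ i, α i • gradient (g i t) x = 0 → ∀ i, α i = 0)
    -- assumption (b)
    (hg_cont : ∀ i, ContinuousOn (fun p : ℝ × EuclideanSpace ℝ (Fin d) => g i p.1 p.2)
      (Icc (0:ℝ) T ×ˢ univ))
    (hgrad_cont : ∀ i, ContinuousOn
      (fun p : ℝ × EuclideanSpace ℝ (Fin d) => gradient (g i p.1) p.2)
      (Icc (0:ℝ) T ×ˢ univ))
    (hequi : ∀ ε' > 0, ∃ δ > 0, ∀ i, ∀ x : EuclideanSpace ℝ (Fin d),
      ∀ s ∈ Icc (0:ℝ) T, ∀ t ∈ Icc (0:ℝ) T, |s - t| < δ → |g i s x - g i t x| < ε')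
    -- assumption (c)
    (hLip : ∃ L > 0, ∃ η > 0, ∀ t ∈ Icc (0:ℝ) T, ∀ i,
      ∀ x ∈ Csub g t + closedBall (0 : EuclideanSpace ℝ (Fin d)) η,
      ∀ y ∈ Csub g t + closedBall (0 : EuclideanSpace ℝ (Fin d)) η,
        ‖gradient (g i t) x - gradient (g i t) y‖ ≤ L * ‖x - y‖) :
    HausdorffCts T (Csub g) := by
  classical
  intro ε₀ hε₀
  set Q : Set (ℝ × EuclideanSpace ℝ (Fin d)) := {p : ℝ × EuclideanSpace ℝ (Fin d) |
      p.1 ∈ Icc (0:ℝ) T ∧ p.2 ∈ Csub g p.1 ∧ (Iactive g ε p.1 p.2).Nonempty} with hQdef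
  have hA : IsClosed ((Icc (0:ℝ) T) ×ˢ (univ : Set (EuclideanSpace ℝ (Fin d)))) :=
    isClosed_Icc.prod isClosed_univ
  have hQclosed : IsClosed Q := by
    have hQeq : Q = (⋂ i, ((Icc (0:ℝ) T ×ˢ (univ : Set (EuclideanSpace ℝ (Fin d)))) ∩
        (fun p : ℝ × EuclideanSpace ℝ (Fin d) => g i p.1 p.2) ⁻¹' (Iic (0:ℝ)))) ∩
        (⋃ i, ((Icc (0:ℝ) T ×ˢ (univ : Set (EuclideanSpace ℝ (Fin d)))) ∩
        (fun p : ℝ × EuclideanSpace ℝ (Fin d) => g i p.1 p.2) ⁻¹' (Icc (-ε) 0))) := by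
      ext p
      simp only [hQdef, mem_setOf_eq, mem_inter_iff, mem_iInter, mem_iUnion, mem_prod,
        mem_univ, and_true, mem_preimage, mem_Iic, mem_Icc, Csub, Iactive, Set.Nonempty]
      constructor
      · rintro ⟨h1, h2, i, hi⟩
        exact ⟨fun j => ⟨h1, h2 j⟩, i, h1, hi⟩
      · rintro ⟨h1, i, hpA, hi⟩
        exact ⟨hpA, fun j => (h1 j).2, i, hi⟩
    rw [hQeq]
    exact (isClosed_iInter fun i =>
        (hg_cont i).preimage_isClosed_of_isClosed hA isClosed_Iic).inter
      (isClosed_iUnion_of_finite fun i =>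
        (hg_cont i).preimage_isClosed_of_isClosed hA isClosed_Icc)
  have hQcomp : IsCompact Q := Metric.isCompact_of_isClosed_isBounded hQclosed hQbdd
  -- bound on Q
  obtain ⟨R, hR⟩ := hQbdd.subset_closedBall 0
  have hQnorm : ∀ p ∈ Q, ‖p.2‖ ≤ R := by
    intro p hp
    have h1 : dist p (0 : ℝ × EuclideanSpace ℝ (Fin d)) ≤ R := mem_closedBall.1 (hR hp)
    calc ‖p.2‖ = dist p.2 (0 : EuclideanSpace ℝ (Fin d)) := (dist_zero_right _).symm
      _ ≤ dist p (0 : ℝ × EuclideanSpace ℝ (Fin d)) := by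
          rw [Prod.dist_eq]; exact le_max_right _ _
      _ ≤ R := h1
  -- uniform bound on gradients over a compact box
  set K : Set (ℝ × EuclideanSpace ℝ (Fin d)) := Icc (0:ℝ) T ×ˢ closedBall 0 (R+1) with hKdef
  have hKcomp : IsCompact K := isCompact_Icc.prod (isCompact_closedBall _ _)
  have hKsub : K ⊆ Icc (0:ℝ) T ×ˢ univ := prod_mono_right (subset_univ _)
  have hGex : ∀ i : Fin m, ∃ G : ℝ, ∀ p ∈ K, ‖gradient (g i p.1) p.2‖ ≤ G := fun i =>
    hKcomp.exists_bound_of_continuousOn ((hgrad_cont i).mono hKsub)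
  choose G' hG' using hGex
  set G : ℝ := 1 + ∑ i, max (G' i) 0 with hGdef
  have hG1 : (1:ℝ) ≤ G := le_add_of_nonneg_right (Finset.sum_nonneg fun i _ => le_max_right _ _)
  have hGpos : (0:ℝ) < G := lt_of_lt_of_le one_pos hG1
  have hGbound : ∀ i, ∀ p ∈ K, ‖gradient (g i p.1) p.2‖ ≤ G := by
    intro i p hp
    calc ‖gradient (g i p.1) p.2‖ ≤ G' i := hG' i p hp
      _ ≤ max (G' i) 0 := le_max_left _ _
      _ ≤ ∑ j, max (G' j) 0 :=
          Finset.single_le_sum (fun j _ => le_max_right (G' j) 0) (Finset.mem_univ i)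
      _ ≤ G := by rw [hGdef]; linarith
  -- local descent data
  have hlocal : ∀ p ∈ Q, ∃ v : EuclideanSpace ℝ (Fin d), ∃ σ > (0:ℝ), ∃ ρ > (0:ℝ),
      ‖v‖ = 1 ∧
      ∀ q : ℝ × EuclideanSpace ℝ (Fin d), q.1 ∈ Icc (0:ℝ) T → dist q p < ρ →
        (∀ i ∈ Iactive g ε p.1 p.2, ⟪gradient (g i q.1) q.2, v⟫ < -σ) ∧
        (∀ i, |g i q.1 q.2 - g i p.1 p.2| < ε/2) := by
    rintro p ⟨hp1, hp2, hp3⟩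
    obtain ⟨v, hvnorm, hvsep⟩ := sep_lemma (fun i => gradient (g i p.1) p.2)
      (Iactive g ε p.1 p.2) hp3 (hPLI p.1 hp1 p.2 hp2 hp3)
    set St : Finset (Fin m) := (Iactive g ε p.1 p.2).toFinset with hSt
    have hStne : St.Nonempty := by
      obtain ⟨i, hi⟩ := hp3
      exact ⟨i, by simpa [hSt] using hi⟩
    set M : ℝ := St.inf' hStne (fun i => -⟪gradient (g i p.1) p.2, v⟫) with hM
    have hMpos : 0 < M := by
      rw [hM, Finset.lt_inf'_iff]
      intro i hi
      have : i ∈ Iactive g ε p.1 p.2 := by simpa [hSt] using hi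
      linarith [hvsep i this]
    set σ : ℝ := M/2 with hσ
    have hσpos : 0 < σ := half_pos hMpos
    have hpA : p ∈ Icc (0:ℝ) T ×ˢ (univ : Set (EuclideanSpace ℝ (Fin d))) :=
      ⟨hp1, mem_univ _⟩
    have hev : ∀ᶠ q in nhdsWithin p (Icc (0:ℝ) T ×ˢ (univ : Set (EuclideanSpace ℝ (Fin d)))),
        (∀ i ∈ Iactive g ε p.1 p.2, ⟪gradient (g i q.1) q.2, v⟫ < -σ) ∧
        (∀ i, |g i q.1 q.2 - g i p.1 p.2| < ε/2) := by
      refine Filter.Eventually.and ?_ ?_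
      · rw [Filter.eventually_all]
        intro i
        by_cases hi : i ∈ Iactive g ε p.1 p.2
        · have hcont : ContinuousWithinAt
              (fun q : ℝ × EuclideanSpace ℝ (Fin d) => ⟪gradient (g i q.1) q.2, v⟫)
              (Icc (0:ℝ) T ×ˢ univ) p :=
            ((hgrad_cont i).inner continuousOn_const) p hpA
          have hlt : ⟪gradient (g i p.1) p.2, v⟫ < -σ := by
            have h1 : M ≤ -⟪gradient (g i p.1) p.2, v⟫ :=
              Finset.inf'_le _ (by simpa [hSt] using hi)
            linarith
          exact (hcont.eventually_lt_const hlt).mono fun q hq _ => hq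
        · exact Filter.Eventually.of_forall fun q hq => absurd hq hi
      · rw [Filter.eventually_all]
        intro i
        have hcont : ContinuousWithinAt
            (fun q : ℝ × EuclideanSpace ℝ (Fin d) => |g i q.1 q.2 - g i p.1 p.2|)
            (Icc (0:ℝ) T ×ˢ univ) p :=
          (((hg_cont i) p hpA).sub continuousWithinAt_const).abs
        have hlt : |g i p.1 p.2 - g i p.1 p.2| < ε/2 := by
          simp [half_pos hε]
        exact hcont.eventually_lt_const hlt
    obtain ⟨ρ, hρpos, hρsub⟩ := Metric.mem_nhdsWithin_iff.1 hev
    refine ⟨v, σ, hσpos, ρ, hρpos, hvnorm, ?_⟩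
    intro q hq1 hq2
    exact hρsub ⟨mem_ball.2 hq2, hq1, mem_univ _⟩
  -- compactness: uniform descent data
  obtain ⟨σ, hσpos, ρ, hρpos, hρhalf, hKEY⟩ : ∃ σ > (0:ℝ), ∃ ρ > (0:ℝ), ρ ≤ 1/2 ∧
      ∀ p ∈ Q, ∃ v : EuclideanSpace ℝ (Fin d), ‖v‖ = 1 ∧
        ∀ q : ℝ × EuclideanSpace ℝ (Fin d), q.1 ∈ Icc (0:ℝ) T → dist q p < ρ →
          ∀ i ∈ Iactive g (ε/2) p.1 p.2, ⟪gradient (g i q.1) q.2, v⟫ ≤ -σ := by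
    rcases Q.eq_empty_or_nonempty with hQe | hQne
    · refine ⟨1, one_pos, 1/2, by norm_num, le_refl _, ?_⟩
      intro p hp
      rw [hQe] at hp
      exact absurd hp (notMem_empty p)
    · choose! v' σ' hσ' ρ' hρ' hv'norm hloc using hlocal
      set U : Q → Set (ℝ × EuclideanSpace ℝ (Fin d)) :=
        fun p => ball (p : ℝ × EuclideanSpace ℝ (Fin d)) (ρ' (p : ℝ × EuclideanSpace ℝ (Fin d)) / 2) with hU
      have hcover : Q ⊆ ⋃ p : Q, U p := by
        intro q hq
        exact mem_iUnion.2 ⟨⟨q, hq⟩, mem_ball_self (half_pos (hρ' q hq))⟩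
      obtain ⟨t, ht⟩ := hQcomp.elim_finite_subcover U (fun p => isOpen_ball) hcover
      have htne : t.Nonempty := by
        obtain ⟨q, hq⟩ := hQne
        have := ht hq
        rw [mem_iUnion₂] at this
        obtain ⟨p, hpt, _⟩ := this
        exact ⟨p, hpt⟩
      refine ⟨t.inf' htne (fun p => σ' (p : ℝ × EuclideanSpace ℝ (Fin d))), ?_,
        min (t.inf' htne (fun p => ρ' (p : ℝ × EuclideanSpace ℝ (Fin d)) / 2)) (1/2), ?_, min_le_right _ _, ?_⟩
      · show (0:ℝ) < _
        rw [Finset.lt_inf'_iff]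
        exact fun p _ => hσ' (p : ℝ × EuclideanSpace ℝ (Fin d)) p.2
      · show (0:ℝ) < _
        refine lt_min ?_ (by norm_num)
        rw [Finset.lt_inf'_iff]
        exact fun p _ => half_pos (hρ' (p : ℝ × EuclideanSpace ℝ (Fin d)) p.2)
      · intro p hp
        have := ht hp
        rw [mem_iUnion₂] at this
        obtain ⟨j, hjt, hj⟩ := this
        refine ⟨v' (j : ℝ × EuclideanSpace ℝ (Fin d)), hv'norm (j : ℝ × EuclideanSpace ℝ (Fin d)) j.2, ?_⟩
        intro q hq1 hq2 i hi
        have hdqj : dist q (j : ℝ × EuclideanSpace ℝ (Fin d)) < ρ' (j : ℝ × EuclideanSpace ℝ (Fin d)) := by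
          have h1 : dist q (j : ℝ × EuclideanSpace ℝ (Fin d)) ≤
              dist q p + dist p (j : ℝ × EuclideanSpace ℝ (Fin d)) := dist_triangle _ _ _
          have h2 : dist p (j : ℝ × EuclideanSpace ℝ (Fin d)) < ρ' (j : ℝ × EuclideanSpace ℝ (Fin d)) / 2 :=
            mem_ball.1 hj
          have h3 : dist q p < ρ' (j : ℝ × EuclideanSpace ℝ (Fin d)) / 2 :=
            lt_of_lt_of_le hq2 (le_trans (min_le_left _ _) (Finset.inf'_le _ hjt))
          linarith
        have hpclose := (hloc (j : ℝ × EuclideanSpace ℝ (Fin d)) j.2 p hp.1 (lt_of_lt_of_le (mem_ball.1 hj)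
          (by linarith [hρ' (j : ℝ × EuclideanSpace ℝ (Fin d)) j.2]))).2
        have hiact : i ∈ Iactive g ε (j : ℝ × EuclideanSpace ℝ (Fin d)).1
            (j : ℝ × EuclideanSpace ℝ (Fin d)).2 := by
          obtain ⟨hi1, hi2⟩ := hi
          have h4 := abs_lt.1 (hpclose i)
          have h5 : g i (j : ℝ × EuclideanSpace ℝ (Fin d)).1
              (j : ℝ × EuclideanSpace ℝ (Fin d)).2 ≤ 0 := (j.2).2.1 i
          constructor
          · linarith
          · exact h5
        have := (hloc (j : ℝ × EuclideanSpace ℝ (Fin d)) j.2 q hq1 hdqj).1 i hiact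
        have h6 : t.inf' htne (fun p => σ' (p : ℝ × EuclideanSpace ℝ (Fin d))) ≤ σ' (j : ℝ × EuclideanSpace ℝ (Fin d)) := Finset.inf'_le _ hjt
        linarith
  -- choose parameters
  set τ : ℝ := min (ρ/2) (min (ε/(8*G)) (ε₀/2)) with hτdef
  have hτpos : 0 < τ := lt_min (half_pos hρpos) (lt_min (by positivity) (half_pos hε₀))
  set θ : ℝ := min (σ*τ/2) (ε/8) with hθdef
  have hθpos : 0 < θ := lt_min (by positivity) (by positivity)
  obtain ⟨δ₁, hδ₁, hδ₁p⟩ := hequi θ hθpos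
  refine ⟨min δ₁ ρ, lt_min hδ₁ hρpos, ?_⟩
  have main : ∀ s ∈ Icc (0:ℝ) T, ∀ t ∈ Icc (0:ℝ) T, |s - t| < min δ₁ ρ →
      ∀ x ∈ Csub g s, ∃ y ∈ Csub g t, edist x y ≤ ENNReal.ofReal (ε₀/2) := by
    intro s hs t ht hst x hx
    by_cases hxt : ∀ i, g i t x ≤ 0
    · exact ⟨x, hxt, by simp [ENNReal.ofReal_pos.2 (half_pos hε₀), le_of_lt]⟩
    push_neg at hxt
    obtain ⟨i₀, hi₀⟩ := hxt
    have hθclose : ∀ i, |g i s x - g i t x| < θ :=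
      fun i => hδ₁p i x s hs t ht (lt_of_lt_of_le hst (min_le_left _ _))
    have hθε8 : θ ≤ ε/8 := min_le_right _ _
    have hQmem : (s, x) ∈ Q := by
      refine ⟨hs, hx, i₀, ?_, hx i₀⟩
      have h4 := abs_lt.1 (hθclose i₀)
      simp only at h4 ⊢
      linarith
    obtain ⟨v, hvnorm, hv⟩ := hKEY (s, x) hQmem
    set lam : ℝ := 2*θ/σ with hlamdef
    have hlampos : 0 < lam := by positivity
    have hlamτ : lam ≤ τ := by
      rw [hlamdef, div_le_iff₀ hσpos]
      have h1 : θ ≤ σ*τ/2 := min_le_left _ _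
      nlinarith
    have hlamρ : lam < ρ := lt_of_le_of_lt hlamτ
      (lt_of_le_of_lt (min_le_left _ _) (by linarith))
    have hxnorm : ‖x‖ ≤ R := hQnorm (s, x) hQmem
    have hseg : ∀ τ' ∈ Icc (0:ℝ) lam, (t, x + τ' • v) ∈ K := by
      intro τ' hτ'
      refine ⟨ht, ?_⟩
      rw [mem_closedBall, dist_zero_right]
      have h1 : ‖τ' • v‖ = τ' := by
        rw [norm_smul, hvnorm, mul_one, Real.norm_eq_abs, abs_of_nonneg hτ'.1]
      calc ‖x + τ' • v‖ ≤ ‖x‖ + ‖τ' • v‖ := norm_add_le _ _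
        _ ≤ R + 1 := by
            rw [h1]
            have : τ' ≤ lam := hτ'.2
            have : lam < 1 := by
              have := hρhalf
              linarith
            linarith
    have hderiv : ∀ i, ∀ τ' ∈ Icc (0:ℝ) lam,
        HasDerivAt (fun τ'' : ℝ => g i t (x + τ'' • v))
          (⟪gradient (g i t) (x + τ' • v), v⟫) τ' := by
      intro i τ' _
      have hc : HasDerivAt (fun τ'' : ℝ => x + τ'' • v) v τ' := by
        simpa using ((hasDerivAt_id τ').smul_const v).const_add x
      have hf := ((hdiff i t ht (x + τ' • v)).hasGradientAt).hasFDerivAt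
      have h2 := hf.comp_hasDerivAt τ' hc
      have h3 : HasDerivAt (fun τ'' : ℝ => g i t (x + τ'' • v))
          ((InnerProductSpace.toDual ℝ _ (gradient (g i t) (x + τ' • v))) v) τ' := h2
      rw [InnerProductSpace.toDual_apply_apply] at h3
      exact h3
    have hdists : dist t s < ρ := by
      rw [Real.dist_eq, abs_sub_comm]
      exact lt_of_lt_of_le hst (min_le_right _ _)
    refine ⟨x + lam • v, ?_, ?_⟩
    · intro i
      by_cases hD : g i t x ≤ -(ε/4)
      · have hb : ∀ τ' ∈ Icc (0:ℝ) lam, ⟪gradient (g i t) (x + τ' • v), v⟫ ≤ G := by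
          intro τ' hτ'
          calc ⟪gradient (g i t) (x + τ' • v), v⟫
              ≤ ‖gradient (g i t) (x + τ' • v)‖ * ‖v‖ := real_inner_le_norm _ _
            _ = ‖gradient (g i t) (x + τ' • v)‖ := by rw [hvnorm, mul_one]
            _ ≤ G := hGbound i (t, x + τ' • v) (hseg τ' hτ')
        have hm := mvt_upper hlampos.le (hderiv i) hb
        simp only [zero_smul, add_zero] at hm
        have hGlam : G * lam ≤ ε/8 := by
          have h1 : lam ≤ ε/(8*G) :=
            le_trans hlamτ (le_trans (min_le_right _ _) (min_le_left _ _))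
          calc G * lam ≤ G * (ε/(8*G)) := mul_le_mul_of_nonneg_left h1 hGpos.le
            _ = ε/8 := by field_simp
        calc g i t (x + lam • v) ≤ g i t x + G * lam := hm
          _ ≤ -(ε/4) + ε/8 := add_le_add hD hGlam
          _ ≤ 0 := by linarith
      · push_neg at hD
        have hact : i ∈ Iactive g (ε/2) s x := by
          have h4 := abs_lt.1 (hθclose i)
          exact ⟨by show -(ε/2) ≤ g i s x; linarith, hx i⟩
        have hb : ∀ τ' ∈ Icc (0:ℝ) lam, ⟪gradient (g i t) (x + τ' • v), v⟫ ≤ -σ := by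
          intro τ' hτ'
          refine hv (t, x + τ' • v) ht ?_ i hact
          rw [Prod.dist_eq]
          refine max_lt hdists ?_
          rw [dist_eq_norm]
          have h1 : x + τ' • v - x = τ' • v := by abel
          rw [h1, norm_smul, hvnorm, mul_one, Real.norm_eq_abs, abs_of_nonneg hτ'.1]
          exact lt_of_le_of_lt hτ'.2 hlamρ
        have hm := mvt_upper hlampos.le (hderiv i) hb
        simp only [zero_smul, add_zero] at hm
        have h4 := abs_lt.1 (hθclose i)
        have h5 : g i s x ≤ 0 := hx i
        have h6 : σ * lam = 2*θ := by
          rw [hlamdef, mul_comm, div_mul_cancel₀ _ hσpos.ne']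
        have h7 : -σ * lam = -(2*θ) := by rw [neg_mul, h6]
        rw [h7] at hm
        calc g i t (x + lam • v) ≤ g i t x + -(2*θ) := hm
          _ ≤ 0 := by linarith
    · have h1 : dist x (x + lam • v) = lam := by
        rw [dist_eq_norm]
        have h2 : x - (x + lam • v) = -(lam • v) := by abel
        rw [h2, norm_neg, norm_smul, hvnorm, mul_one, Real.norm_eq_abs,
          abs_of_nonneg hlampos.le]
      rw [edist_dist, h1]
      refine ENNReal.ofReal_le_ofReal ?_
      exact le_trans hlamτ (le_trans (min_le_right _ _) (min_le_right _ _))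
  intro s hs t ht hst
  have h1 := main s hs t ht hst
  have h2 := main t ht s hs (by rwa [abs_sub_comm])
  have h3 := EMetric.hausdorffEdist_le_of_mem_edist h1 h2
  refine lt_of_le_of_lt h3 ?_
  rw [ENNReal.ofReal_lt_ofReal_iff hε₀]
  linarith
end
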